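/- arXiv:1809.08769 — 4 statements merged into one kernel-verified Lean document; each statement's English description precedes it below -/
import Mathlib

section
/- Let R be a commutative ring, A ∈ R^{m×n}, A° ∈ R^{n×m}, and let a_j denote the coefficient of Z^j in det(I_m + Z·(A·A°)). If D_{k+1}(A) = 0 (all (k+1)×(k+1) minors of A vanish), then A · Adj^{(k)}_{A°}(A) · A = a_k · A, where Adj^{(k)}_{A°}(A) := a_{k−1}·A° − a_{k−2}·A°·A·A° + ⋯ + (−1)^{k−1}·(A°·A)^{k−1}·A°. -/
open Matrix Polynomial

/-- The `k`-th determinantal ideal of a matrix. -/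
noncomputable def detIdeal {R : Type*} [CommRing R] {m n : ℕ} (k : ℕ)
    (A : Matrix (Fin m) (Fin n) R) : Ideal R :=
  Ideal.span {x | ∃ (α : Fin k → Fin m) (β : Fin k → Fin n),
    StrictMono α ∧ StrictMono β ∧ x = (A.submatrix α β).det}

/-- `aCoeff A A' j` is the coefficient of `Z^j` in `det(I_m + Z·(A·A'))`. -/
noncomputable def aCoeff {R : Type*} [CommRing R] {m n : ℕ}
    (A : Matrix (Fin m) (Fin n) R) (A' : Matrix (Fin n) (Fin m) R) (j : ℕ) : R :=
  (((1 : Matrix (Fin m) (Fin m) R[X]) + (X : R[X]) • (A * A').map C).det).coeff j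

/-- `Adj^{(k)}_{A'}(A) = Σ_{i=0}^{k−1} (−1)^i · a_{k−1−i} · (A'·A)^i · A'`. -/
noncomputable def adjK {R : Type*} [CommRing R] {m n : ℕ} (k : ℕ)
    (A : Matrix (Fin m) (Fin n) R) (A' : Matrix (Fin n) (Fin m) R) :
    Matrix (Fin n) (Fin m) R :=
  ∑ i ∈ Finset.range k, ((-1 : R) ^ i * aCoeff A A' (k - 1 - i)) • ((A' * A) ^ i * A')

/-! ### Auxiliary material -/

lemma trunc_cancel {R : Type*} [CommRing R] {p d : R[X]} (hp : p.coeff 0 = 1) {k : ℕ}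
    (h : ∀ j ≤ k, (p * d).coeff j = 0) : ∀ j ≤ k, d.coeff j = 0 := by
  intro j
  induction j using Nat.strong_induction_on with
  | _ j IH =>
    intro hj
    have h0 := h j hj
    rw [Polynomial.coeff_mul] at h0
    rw [Finset.sum_eq_single_of_mem (0, j) (by simp [Finset.mem_antidiagonal])] at h0
    · simpa [hp] using h0
    · rintro ⟨b1, b2⟩ hb hne
      rw [Finset.HasAntidiagonal.mem_antidiagonal] at hb
      have hb1 : b1 ≠ 0 := by rintro rfl; simp_all
      have : b2 < j := by omega
      rw [IH b2 this (by omega), mul_zero]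

section SortPerm

variable {n r : ℕ}

lemma card_image_univ (g : Fin r → Fin n) (hg : Function.Injective g) :
    (Finset.univ.image g).card = r := by
  rw [Finset.card_image_of_injective _ hg, Finset.card_univ, Fintype.card_fin]

noncomputable def sortOf (g : Fin r → Fin n) (hg : Function.Injective g) : Fin r → Fin n :=
  (Finset.univ.image g).orderEmbOfFin (card_image_univ g hg)

lemma sortOf_strictMono (g : Fin r → Fin n) (hg : Function.Injective g) :
    StrictMono (sortOf g hg) := OrderEmbedding.strictMono _

noncomputable def permOf (g : Fin r → Fin n) (hg : Function.Injective g) :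
    Equiv.Perm (Fin r) :=
  Equiv.ofBijective
    (fun i => ((Finset.univ.image g).orderIsoOfFin (card_image_univ g hg)).symm
      ⟨g i, by simp⟩)
    (Finite.injective_iff_bijective.mp (fun a b hab => by
      have h2 := congrArg ((Finset.univ.image g).orderIsoOfFin (card_image_univ g hg)) hab
      rw [OrderIso.apply_symm_apply, OrderIso.apply_symm_apply] at h2
      exact hg (congrArg Subtype.val h2)))

lemma sortOf_permOf (g : Fin r → Fin n) (hg : Function.Injective g) (i : Fin r) :
    sortOf g hg (permOf g hg i) = g i := by
  unfold sortOf permOf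
  rw [Equiv.ofBijective_apply, ← Finset.coe_orderIsoOfFin_apply, OrderIso.apply_symm_apply]

lemma sortOf_comp_eq (h : Fin r → Fin n) (hh : StrictMono h) (σ : Equiv.Perm (Fin r))
    (hg : Function.Injective (h ∘ σ)) : sortOf (h ∘ σ) hg = h := by
  unfold sortOf
  refine (Finset.orderEmbOfFin_unique _ (fun x => ?_) hh).symm
  rw [Finset.mem_image]
  exact ⟨σ.symm x, Finset.mem_univ _, by simp⟩

lemma permOf_comp_eq (h : Fin r → Fin n) (hh : StrictMono h) (σ : Equiv.Perm (Fin r))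
    (hg : Function.Injective (h ∘ σ)) : permOf (h ∘ σ) hg = σ := by
  refine Equiv.ext fun i => ?_
  have h1 := sortOf_permOf (h ∘ σ) hg i
  rw [sortOf_comp_eq h hh σ hg] at h1
  exact hh.injective h1

end SortPerm

/-- Cauchy–Binet-lite: the determinant of `A.submatrix f id * W` lies in the ideal
generated by the `r × r` minors of `A`. -/
lemma det_submatrix_mul_mem {R : Type*} [CommRing R] {m n : ℕ} (A : Matrix (Fin m) (Fin n) R)
    {r : ℕ} (f : Fin r → Fin m) (hf : StrictMono f) (W : Matrix (Fin n) (Fin r) R) :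
    (A.submatrix f id * W).det ∈ detIdeal r A := by
  classical
  have hrows : (A.submatrix f id * W) = fun i => ∑ c : Fin n, A (f i) c • W c := by
    ext i j
    simp [Matrix.mul_apply]
  have h1 : (A.submatrix f id * W).det
      = ∑ g ∈ Fintype.piFinset (fun _ : Fin r => (Finset.univ : Finset (Fin n))),
          Matrix.detRowAlternating (fun i => A (f i) (g i) • W (g i)) := by
    show Matrix.detRowAlternating (A.submatrix f id * W) = _
    rw [hrows]
    exact (Matrix.detRowAlternating (R := R) (n := Fin r)).toMultilinearMap.map_sum_finset
      (fun i c => A (f i) c • W c) (fun _ => Finset.univ)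
  rw [Fintype.piFinset_univ] at h1
  have h2 : ∀ g : Fin r → Fin n, Matrix.detRowAlternating (fun i => A (f i) (g i) • W (g i))
      = (∏ i, A (f i) (g i)) • (W.submatrix g id).det :=
    fun g => (Matrix.detRowAlternating (R := R) (n := Fin r)).toMultilinearMap.map_smul_univ
      (fun i => A (f i) (g i)) (fun i => W (g i))
  simp_rw [h2] at h1
  rw [h1, ← Finset.sum_filter_add_sum_filter_not Finset.univ (fun g => Function.Injective g)]
  have h3 : ∑ g ∈ Finset.univ.filter (fun g : Fin r → Fin n => ¬ Function.Injective g),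
      (∏ i, A (f i) (g i)) • (W.submatrix g id).det = 0 := by
    refine Finset.sum_eq_zero fun g hg => ?_
    rw [Finset.mem_filter] at hg
    obtain ⟨a, b, hab, hne⟩ := Function.not_injective_iff.mp hg.2
    have : (W.submatrix g id).det = 0 :=
      Matrix.det_zero_of_row_eq hne (by ext j; simp [hab])
    rw [this, smul_zero]
  rw [h3, add_zero]
  have h4 : ∑ g ∈ Finset.univ.filter (fun g : Fin r → Fin n => Function.Injective g),
        (∏ i, A (f i) (g i)) • (W.submatrix g id).det
      = ∑ a ∈ (Finset.univ : Finset (Equiv.Perm (Fin r))) ×ˢ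
            (Finset.univ.filter (fun h : Fin r → Fin n => StrictMono h)),
          (∏ i, A (f i) ((a.2 ∘ a.1) i)) • (W.submatrix (a.2 ∘ a.1) id).det := by
    refine Finset.sum_nbij' (i := fun g => if hg : Function.Injective g
        then (permOf g hg, sortOf g hg) else (1, g))
      (j := fun a => a.2 ∘ a.1) ?_ ?_ ?_ ?_ ?_
    · intro g hg
      rw [Finset.mem_filter] at hg
      rw [dif_pos hg.2, Finset.mem_product, Finset.mem_filter]
      exact ⟨Finset.mem_univ _, Finset.mem_univ _, sortOf_strictMono g hg.2⟩
    · intro a ha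
      rw [Finset.mem_product, Finset.mem_filter] at ha
      rw [Finset.mem_filter]
      exact ⟨Finset.mem_univ _, ha.2.2.injective.comp a.1.injective⟩
    · intro g hg
      rw [Finset.mem_filter] at hg
      rw [dif_pos hg.2]
      funext i
      exact sortOf_permOf g hg.2 i
    · intro a ha
      rw [Finset.mem_product, Finset.mem_filter] at ha
      have hinj : Function.Injective (a.2 ∘ a.1) := ha.2.2.injective.comp a.1.injective
      rw [dif_pos hinj]
      exact Prod.ext (permOf_comp_eq a.2 ha.2.2 a.1 hinj)
        (sortOf_comp_eq a.2 ha.2.2 a.1 hinj)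
    · intro g hg
      rw [Finset.mem_filter] at hg
      rw [dif_pos hg.2]
      have hfun : sortOf g hg.2 ∘ (permOf g hg.2) = g := funext (sortOf_permOf g hg.2)
      rw [hfun]
  rw [h4, Finset.sum_product_right]
  refine Ideal.sum_mem _ fun h hh => ?_
  rw [Finset.mem_filter] at hh
  have h5 : ∑ σ : Equiv.Perm (Fin r),
        (∏ i, A (f i) ((h ∘ σ) i)) • (W.submatrix (h ∘ σ) id).det
      = (A.submatrix f h).det * (W.submatrix h id).det := by
    have hsub : ∀ σ : Equiv.Perm (Fin r),
        W.submatrix (h ∘ σ) id = (W.submatrix h id).submatrix σ id := by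
      intro σ; rw [Matrix.submatrix_submatrix]; rfl
    have hperm : ∀ σ : Equiv.Perm (Fin r),
        (W.submatrix (h ∘ σ) id).det
          = (Equiv.Perm.sign σ : ℤ) * (W.submatrix h id).det := by
      intro σ; rw [hsub σ, Matrix.det_permute]
    set c := (W.submatrix h id).det with hc
    simp_rw [hperm, smul_eq_mul]
    rw [← Matrix.det_transpose (A.submatrix f h), Matrix.det_apply', Finset.sum_mul]
    refine Finset.sum_congr rfl fun σ _ => ?_
    have : ∏ i, ((A.submatrix f h)ᵀ) (σ i) i = ∏ i, A (f i) ((h ∘ σ) i) := by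
      refine Finset.prod_congr rfl fun i _ => rfl
    rw [this]
    ring
  rw [h5]
  refine Ideal.mul_mem_right _ _ (Ideal.subset_span ?_)
  exact ⟨f, h, hf, hh.2, rfl⟩

/-- If a matrix agrees with the identity outside a finset `t` of rows, its determinant
is the determinant of the square submatrix indexed by `t`. -/
lemma det_eq_det_submatrix {R : Type*} [CommRing R] {m r : ℕ}
    (M : Matrix (Fin m) (Fin m) R) (t : Finset (Fin m)) (ht : t.card = r)
    (h : ∀ i ∉ t, M i = Pi.single i 1) :
    M.det = (M.submatrix (t.orderEmbOfFin ht) (t.orderEmbOfFin ht)).det := by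
  classical
  let e : Fin r ⊕ {i // i ∉ t} ≃ Fin m :=
    (Equiv.sumCongr (t.orderIsoOfFin ht).toEquiv (Equiv.refl _)).trans
      (Equiv.sumCompl (fun i => i ∈ t))
  rw [← Matrix.det_submatrix_equiv_self e M]
  have he1 : ∀ i : Fin r, e (Sum.inl i) = t.orderEmbOfFin ht i := by
    intro i
    simp [e, Equiv.sumCompl]
  have he2 : ∀ i : {i // i ∉ t}, e (Sum.inr i) = i.val := by
    intro i
    simp [e, Equiv.sumCompl]
  have hblock : M.submatrix e e =
      Matrix.fromBlocks (M.submatrix (t.orderEmbOfFin ht) (t.orderEmbOfFin ht))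
        (Matrix.of fun i (j : {i // i ∉ t}) => M (t.orderEmbOfFin ht i) j.val)
        0 1 := by
    ext i j
    cases i with
    | inl i =>
      cases j with
      | inl j => simp [Matrix.submatrix_apply, he1, Matrix.fromBlocks]
      | inr j => simp [Matrix.submatrix_apply, he1, he2, Matrix.fromBlocks]
    | inr i =>
      cases j with
      | inl j =>
        simp only [Matrix.submatrix_apply, he1, he2, Matrix.fromBlocks_apply₂₁,
          Matrix.zero_apply]
        rw [h i.val i.prop]
        have : (t.orderEmbOfFin ht j) ≠ i.val := by
          intro hc
          exact i.prop (hc ▸ t.orderEmbOfFin_mem ht j)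
        simp [Pi.single_apply, this]
      | inr j =>
        simp only [Matrix.submatrix_apply, he2, Matrix.fromBlocks_apply₂₂]
        rw [h i.val i.prop]
        rw [Pi.single_apply, Matrix.one_apply]
        by_cases hij : i = j
        · simp [hij]
        · have : j.val ≠ i.val := fun hc => hij (Subtype.ext hc).symm
          simp [hij, this]
  rw [hblock, Matrix.det_fromBlocks_zero₂₁, Matrix.det_one, mul_one]

section Main

variable {R : Type*} [CommRing R] {m n : ℕ} (A : Matrix (Fin m) (Fin n) R)
  (A' : Matrix (Fin n) (Fin m) R)

/-- The truncated "adjugate" matrices `M_j = Σ_{i≤j} (-1)^i a_{j-i} (A·A')^i`. -/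
noncomputable def Mmat (j : ℕ) : Matrix (Fin m) (Fin m) R :=
  ∑ i ∈ Finset.range (j + 1), ((-1 : R) ^ i * aCoeff A A' (j - i)) • (A * A') ^ i

/-- The polynomial matrix `N = 1 + X·(A·A')`. -/
noncomputable def Nmat : Matrix (Fin m) (Fin m) R[X] :=
  1 + (X : R[X]) • (A * A').map C

/-- The truncated polynomial matrix `G = Σ_{j≤k} X^j M_j`. -/
noncomputable def Gmat (k : ℕ) : Matrix (Fin m) (Fin m) R[X] :=
  ∑ j ∈ Finset.range (k + 1), (X : R[X]) ^ j • (Mmat A A' j).map C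

lemma Nmat_det_coeff (j : ℕ) : (Nmat A A').det.coeff j = aCoeff A A' j := rfl

lemma aCoeff_zero : aCoeff A A' 0 = 1 := by
  classical
  unfold aCoeff
  rw [Polynomial.coeff_zero_eq_eval_zero, ← Polynomial.coe_evalRingHom, RingHom.map_det]
  have : ((1 : Matrix (Fin m) (Fin m) R[X]) + (X : R[X]) • (A * A').map C).map (evalRingHom 0)
      = 1 := by
    ext i j
    simp [Matrix.one_apply, apply_ite (eval (0 : R))]
  rw [show (evalRingHom (0 : R)).mapMatrix
      ((1 : Matrix (Fin m) (Fin m) R[X]) + (X : R[X]) • (A * A').map C)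
    = ((1 : Matrix (Fin m) (Fin m) R[X]) + (X : R[X]) • (A * A').map C).map (evalRingHom 0)
    from rfl, this, det_one]

lemma Mmat_zero : Mmat A A' 0 = 1 := by
  unfold Mmat
  simp [aCoeff_zero]

lemma Mmat_succ (j : ℕ) :
    Mmat A A' (j + 1) + (A * A') * Mmat A A' j = aCoeff A A' (j + 1) • 1 := by
  unfold Mmat
  rw [Finset.sum_range_succ'
    (fun i => ((-1 : R) ^ i * aCoeff A A' (j + 1 - i)) • (A * A') ^ i) (j + 1)]
  rw [Finset.mul_sum]
  have h1 : ∀ i, (A * A') * (((-1 : R) ^ i * aCoeff A A' (j - i)) • (A * A') ^ i)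
      = ((-1 : R) ^ i * aCoeff A A' (j - i)) • (A * A') ^ (i + 1) := by
    intro i; rw [mul_smul_comm, ← pow_succ']
  simp_rw [h1]
  have h2 : ∀ i : ℕ, (j + 1 - (i + 1)) = j - i := fun i => by omega
  simp_rw [h2]
  rw [add_comm (∑ i ∈ Finset.range (j + 1),
      ((-1 : R) ^ (i + 1) * aCoeff A A' (j - i)) • (A * A') ^ (i + 1)) _,
    add_assoc, ← Finset.sum_add_distrib]
  have h3 : ∀ i, ((-1 : R) ^ (i + 1) * aCoeff A A' (j - i)) • (A * A') ^ (i + 1)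
      + ((-1 : R) ^ i * aCoeff A A' (j - i)) • (A * A') ^ (i + 1) = 0 := by
    intro i
    rw [← add_smul]
    have : (-1 : R) ^ (i + 1) * aCoeff A A' (j - i)
        + (-1 : R) ^ i * aCoeff A A' (j - i) = 0 := by ring
    rw [this, zero_smul]
  simp_rw [h3]
  simp

lemma NG (k : ℕ) : Nmat A A' * Gmat A A' k
    = (∑ j ∈ Finset.range (k + 1), C (aCoeff A A' j) * X ^ j) • 1
      + (X : R[X]) ^ (k + 1) • ((A * A').map C * (Mmat A A' k).map C) := by
  unfold Nmat Gmat
  rw [add_mul, one_mul, smul_mul_assoc, Finset.mul_sum]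
  have h1 : ∀ j, (A * A').map C * ((X : R[X]) ^ j • (Mmat A A' j).map C)
      = (X : R[X]) ^ j • ((A * A').map C * (Mmat A A' j).map C) :=
    fun j => mul_smul_comm _ _ _
  simp_rw [h1, Finset.smul_sum]
  have h2 : ∀ j, (X : R[X]) • (X : R[X]) ^ j • ((A * A').map C * (Mmat A A' j).map C)
      = (X : R[X]) ^ (j + 1) • ((A * A').map C * (Mmat A A' j).map C) := by
    intro j; rw [smul_smul, ← pow_succ']
  simp_rw [h2]
  rw [Finset.sum_range_succ
    (fun j => (X : R[X]) ^ (j + 1) • ((A * A').map C * (Mmat A A' j).map C)) k]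
  rw [Finset.sum_range_succ' (fun j => (X : R[X]) ^ j • (Mmat A A' j).map C) k]
  rw [Finset.sum_range_succ' (fun j => (C (aCoeff A A' j) * X ^ j)) k]
  rw [add_smul, Finset.sum_smul]
  have h3 : ∀ j, (X : R[X]) ^ (j + 1) • (Mmat A A' (j + 1)).map C
        + (X : R[X]) ^ (j + 1) • ((A * A').map C * (Mmat A A' j).map C)
      = (C (aCoeff A A' (j + 1)) * X ^ (j + 1)) • (1 : Matrix (Fin m) (Fin m) R[X]) := by
    intro j
    ext i i' : 2
    have h := congrFun (congrFun (Mmat_succ A A' j) i) i'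
    simp only [Matrix.add_apply, Matrix.smul_apply, Matrix.one_apply, smul_eq_mul,
      Matrix.mul_apply] at h
    simp only [Matrix.add_apply, Matrix.smul_apply, Matrix.map_apply, Matrix.mul_apply,
      smul_eq_mul, ← _root_.map_mul, ← map_sum, Matrix.one_apply]
    rw [← mul_add, ← map_add, h]
    by_cases hii : i = i' <;> simp [hii] <;> ring
  have h4 : ((X : R[X]) ^ 0 • (Mmat A A' 0).map C)
      = (C (aCoeff A A' 0) * X ^ 0) • (1 : Matrix (Fin m) (Fin m) R[X]) := by
    rw [Mmat_zero]
    ext i i'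
    simp [Matrix.one_apply, apply_ite C, aCoeff_zero]
  have h5 : ∑ i ∈ Finset.range k,
        (C (aCoeff A A' (i + 1)) * X ^ (i + 1)) • (1 : Matrix (Fin m) (Fin m) R[X])
      = ∑ j ∈ Finset.range k, (X : R[X]) ^ (j + 1) • (Mmat A A' (j + 1)).map C
        + ∑ j ∈ Finset.range k,
            (X : R[X]) ^ (j + 1) • ((A * A').map C * (Mmat A A' j).map C) := by
    rw [← Finset.sum_add_distrib]
    exact Finset.sum_congr rfl fun j _ => (h3 j).symm
  rw [h4, h5]
  abel

/-- The key identity: the entries of `M_k · A` are coefficients of determinants of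
column-updated versions of `N`. -/
lemma Mmat_mul_entry (k : ℕ) (p : Fin m) (q : Fin n) :
    (Mmat A A' k * A) p q
      = (((Nmat A A').updateCol p (fun r => C (A r q))).det).coeff k := by
  classical
  set v : Fin m → R[X] := fun r => C (A r q) with hv
  set N := Nmat A A' with hN
  set u := cramer N v with hu
  set w := Gmat A A' k *ᵥ v with hw
  set qk : R[X] := ∑ j ∈ Finset.range (k + 1), C (aCoeff A A' j) * X ^ j with hqk
  have hdvd : (X : R[X]) ^ (k + 1) ∣ (N.det - qk) := by
    rw [Polynomial.X_pow_dvd_iff]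
    intro d hd
    rw [Polynomial.coeff_sub, Nmat_det_coeff, hqk, Polynomial.finset_sum_coeff]
    simp_rw [Polynomial.coeff_C_mul, Polynomial.coeff_X_pow]
    rw [Finset.sum_eq_single_of_mem d (Finset.mem_range.mpr hd)
      (by intro b _ hbd; simp [Ne.symm hbd])]
    simp
  obtain ⟨h, hh⟩ := hdvd
  set Z := (A * A').map C * (Mmat A A' k).map C with hZ
  set z : Fin m → R[X] := h • v - Z *ᵥ v with hz
  have h3 : N *ᵥ (u - w) = (X : R[X]) ^ (k + 1) • z := by
    rw [Matrix.mulVec_sub, Matrix.mulVec_cramer, hw, Matrix.mulVec_mulVec, NG,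
      Matrix.add_mulVec, Matrix.smul_mulVec, Matrix.one_mulVec,
      Matrix.smul_mulVec]
    have hdet : N.det = qk + X ^ (k + 1) * h := by rw [← hh]; ring
    rw [hdet, ← hqk, hz, smul_sub, add_smul, mul_smul]
    abel
  have h4 : N.det • (u - w) = (X : R[X]) ^ (k + 1) • (adjugate N *ᵥ z) := by
    have : adjugate N *ᵥ (N *ᵥ (u - w)) = N.det • (u - w) := by
      rw [Matrix.mulVec_mulVec, Matrix.adjugate_mul, Matrix.smul_mulVec,
        Matrix.one_mulVec]
    rw [← this, h3, Matrix.mulVec_smul]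
  have h5 : ∀ j ≤ k, (N.det * ((u - w) p)).coeff j = 0 := by
    intro j hj
    have := congrFun h4 p
    simp only [Pi.smul_apply, smul_eq_mul] at this
    rw [this]
    exact Polynomial.X_pow_dvd_iff.mp (Dvd.intro _ rfl) j (by omega)
  have h6 : ((u - w) p).coeff k = 0 := by
    refine trunc_cancel ?_ h5 k le_rfl
    rw [Nmat_det_coeff]; exact aCoeff_zero A A'
  have h7 : (u p).coeff k = (w p).coeff k := by
    have h6' : (u p - w p).coeff k = 0 := h6
    rw [Polynomial.coeff_sub] at h6'
    exact sub_eq_zero.mp h6'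
  have h8 : (w p).coeff k = (Mmat A A' k * A) p q := by
    have hwp : w p = ∑ j ∈ Finset.range (k + 1), (X : R[X]) ^ j * C ((Mmat A A' j * A) p q) := by
      rw [hw]
      simp only [Matrix.mulVec, dotProduct, Gmat, Matrix.sum_apply, Matrix.smul_apply,
        Matrix.map_apply, smul_eq_mul, Finset.sum_mul]
      rw [Finset.sum_comm]
      refine Finset.sum_congr rfl fun j _ => ?_
      rw [Matrix.mul_apply, map_sum, Finset.mul_sum]
      refine Finset.sum_congr rfl fun r _ => ?_
      rw [_root_.map_mul]; ring
    rw [hwp, Polynomial.finset_sum_coeff]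
    have : ∀ j, ((X : R[X]) ^ j * C ((Mmat A A' j * A) p q)).coeff k
        = if k = j then (Mmat A A' j * A) p q else 0 := by
      intro j
      rw [mul_comm, Polynomial.coeff_C_mul, Polynomial.coeff_X_pow, mul_ite, mul_one, mul_zero]
    simp_rw [this]
    rw [Finset.sum_eq_single_of_mem k (Finset.mem_range.mpr (by omega))
      (by intro b _ hbd; simp [Ne.symm hbd])]
    simp
  have h9 : u p = ((Nmat A A').updateCol p v).det := by
    rw [hu, Matrix.cramer_apply]
  rw [← h9, h7, h8]

/-- The square matrices arising in the subset expansion of the updated determinant. -/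
noncomputable def Esmat (p : Fin m) (q : Fin n) (s : Finset (Fin m)) :
    Matrix (Fin m) (Fin m) R :=
  Matrix.of fun i j => if i ∈ s then (A * A') j i
    else (if i = p then A j q else (1 : Matrix (Fin m) (Fin m) R) i j)

lemma Esmat_mem (p : Fin m) (q : Fin n) (s : Finset (Fin m)) {k : ℕ}
    (hp : p ∉ s) (hcard : s.card = k) : (Esmat A A' p q s).det ∈ detIdeal (k + 1) A := by
  classical
  set t : Finset (Fin m) := insert p s with hts
  have ht : t.card = k + 1 := by rw [hts, Finset.card_insert_of_notMem hp, hcard]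
  set f := t.orderEmbOfFin ht with hfdef
  have hout : ∀ i ∉ t, (Esmat A A' p q s) i = Pi.single i 1 := by
    intro i hi
    rw [hts, Finset.mem_insert, not_or] at hi
    funext j
    simp only [Esmat, Matrix.of_apply, if_neg hi.2, if_neg hi.1]
    rw [Matrix.one_apply, Pi.single_apply]
    exact if_congr eq_comm rfl rfl
  rw [det_eq_det_submatrix (Esmat A A' p q s) t ht hout]
  set W : Matrix (Fin n) (Fin (k + 1)) R :=
    Matrix.of fun c i => if f i = p then (if c = q then 1 else 0) else A' c (f i) with hW
  have hsub : (Esmat A A' p q s).submatrix f f = (A.submatrix f id * W)ᵀ := by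
    ext i j
    simp only [Matrix.submatrix_apply, Matrix.transpose_apply, Matrix.mul_apply, hW,
      Matrix.of_apply, Esmat, id]
    by_cases his : f i ∈ s
    · have hne : f i ≠ p := fun hc => hp (hc ▸ his)
      simp only [if_pos his, if_neg hne, Matrix.mul_apply]
    · have hmem : f i ∈ t := by rw [hfdef]; exact t.orderEmbOfFin_mem ht i
      rw [hts, Finset.mem_insert] at hmem
      have hip : f i = p := hmem.resolve_right his
      simp only [if_neg his, if_pos hip]
      rw [Finset.sum_congr rfl (fun c _ => by rw [mul_ite, mul_one, mul_zero])]
      rw [Finset.sum_ite_eq' Finset.univ q (fun c => A (f j) c)]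
      simp
  rw [hsub, Matrix.det_transpose]
  exact det_submatrix_mul_mem A f (t.orderEmbOfFin ht).strictMono W

lemma coeff_det_update_mem (p : Fin m) (q : Fin n) (k : ℕ) :
    (((Nmat A A').updateCol p (fun r => C (A r q))).det).coeff k ∈ detIdeal (k + 1) A := by
  classical
  set v : Fin m → R[X] := fun r => C (A r q) with hv
  have hDT : ((Nmat A A').updateCol p v).det = ((Nmat A A')ᵀ.updateRow p v).det := by
    rw [← Matrix.det_transpose ((Nmat A A')ᵀ.updateRow p v)]
    congr 1
    ext i j
    simp [Matrix.updateRow_apply, Matrix.updateCol_apply]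
  rw [hDT]
  set aRow : Fin m → Fin m → R[X] :=
    fun i => if i = p then 0 else (X : R[X]) • fun j => C ((A * A') j i) with haRow
  set bRow : Fin m → Fin m → R[X] :=
    fun i => if i = p then v else fun j => (1 : Matrix (Fin m) (Fin m) R[X]) i j with hbRow
  have hE : ((Nmat A A')ᵀ.updateRow p v) = aRow + bRow := by
    funext i j
    simp only [Pi.add_apply, haRow, hbRow]
    by_cases hip : i = p
    · subst hip
      simp [Matrix.updateRow_apply]
    · simp only [if_neg hip, Matrix.updateRow_apply, Matrix.transpose_apply, Nmat,
        Matrix.add_apply, Matrix.smul_apply, Matrix.map_apply, Pi.smul_apply, Pi.zero_apply]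
      rw [Matrix.one_apply, Matrix.one_apply]
      rw [if_congr (Iff.intro Eq.symm Eq.symm) rfl rfl]
      ring
  have hdet : ((Nmat A A')ᵀ.updateRow p v).det
      = ∑ s : Finset (Fin m), Matrix.detRowAlternating (s.piecewise aRow bRow) := by
    show Matrix.detRowAlternating ((Nmat A A')ᵀ.updateRow p v) = _
    rw [hE]
    exact (Matrix.detRowAlternating (R := R[X])
      (n := Fin m)).toMultilinearMap.map_add_univ aRow bRow
  rw [hdet, Polynomial.finset_sum_coeff]
  refine Ideal.sum_mem _ fun s _ => ?_
  by_cases hps : p ∈ s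
  · have : s.piecewise aRow bRow p = 0 := by
      rw [Finset.piecewise_eq_of_mem _ _ _ hps, haRow]
      simp
    have h0 : Matrix.detRowAlternating (s.piecewise aRow bRow) = (0 : R[X]) :=
      (Matrix.detRowAlternating (R := R[X])
        (n := Fin m)).toMultilinearMap.map_coord_zero p this
    rw [h0]
    simp only [Polynomial.coeff_zero]
    exact Ideal.zero_mem _
  · set cRow : Fin m → Fin m → R[X] := fun i j => C ((A * A') j i) with hcRow
    set mRow : Fin m → Fin m → R[X] := s.piecewise cRow bRow with hmRow
    have hpc : s.piecewise aRow bRow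
        = s.piecewise (fun i => (X : R[X]) • mRow i) mRow := by
      funext i
      by_cases his : i ∈ s
      · rw [Finset.piecewise_eq_of_mem _ _ _ his, Finset.piecewise_eq_of_mem _ _ _ his,
          hmRow, Finset.piecewise_eq_of_mem _ _ _ his, haRow]
        have hne : i ≠ p := fun hc => hps (hc ▸ his)
        simp only [if_neg hne]
        rfl
      · rw [Finset.piecewise_eq_of_notMem _ _ _ his, Finset.piecewise_eq_of_notMem _ _ _ his,
          hmRow, Finset.piecewise_eq_of_notMem _ _ _ his]
    have hsmul : Matrix.detRowAlternating (s.piecewise aRow bRow)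
        = (X : R[X]) ^ s.card * Matrix.detRowAlternating mRow := by
      have h1 : Matrix.detRowAlternating (s.piecewise (fun i => (X : R[X]) • mRow i) mRow)
          = (∏ _i ∈ s, (X : R[X])) • Matrix.detRowAlternating mRow :=
        (Matrix.detRowAlternating (R := R[X])
          (n := Fin m)).toMultilinearMap.map_piecewise_smul (fun _ => (X : R[X])) mRow s
      rw [hpc, h1, Finset.prod_const, smul_eq_mul]
    have hmap : Matrix.detRowAlternating mRow = C ((Esmat A A' p q s).det) := by
      have : mRow = ((Esmat A A' p q s).map C : Matrix (Fin m) (Fin m) R[X]) := by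
        funext i j
        simp only [hmRow, Matrix.map_apply, Esmat, Matrix.of_apply]
        by_cases his : i ∈ s
        · rw [Finset.piecewise_eq_of_mem _ _ _ his, hcRow, if_pos his]
        · rw [Finset.piecewise_eq_of_notMem _ _ _ his, hbRow, if_neg his]
          by_cases hip : i = p
          · simp [hip, hv]
          · simp only [if_neg hip]
            rw [Matrix.one_apply, Matrix.one_apply, apply_ite C, _root_.map_one,
              _root_.map_zero]
      rw [this]
      exact (RingHom.map_det C (Esmat A A' p q s)).symm
    rw [hsmul, hmap, mul_comm, Polynomial.coeff_C_mul, Polynomial.coeff_X_pow]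
    by_cases hsk : k = s.card
    · rw [if_pos hsk, mul_one]
      exact Esmat_mem A A' p q s hps hsk.symm
    · rw [if_neg hsk, mul_zero]
      exact Ideal.zero_mem _

lemma Mmat_mul_eq_zero {k : ℕ} (hA : detIdeal (k + 1) A = ⊥) :
    Mmat A A' k * A = 0 := by
  ext p q
  rw [Matrix.zero_apply, Mmat_mul_entry]
  have := coeff_det_update_mem A A' p q k
  rw [hA] at this
  exact Ideal.mem_bot.mp this

lemma mul_pow_comm (i : ℕ) : A * (A' * A) ^ i = (A * A') ^ i * A := by
  induction i with
  | zero => simp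
  | succ i ih =>
    rw [pow_succ, pow_succ, ← Matrix.mul_assoc, ih]
    rw [Matrix.mul_assoc ((A * A') ^ i) A (A' * A), ← Matrix.mul_assoc A A' A,
      ← Matrix.mul_assoc ((A * A') ^ i) (A * A') A]

end Main

theorem stmt13 {R : Type*} [CommRing R] {m n k : ℕ}
    (A : Matrix (Fin m) (Fin n) R) (A' : Matrix (Fin n) (Fin m) R)
    (hA : detIdeal (k + 1) A = ⊥) :
    A * adjK k A A' * A = aCoeff A A' k • A := by
  have hM : Mmat A A' k * A = 0 := Mmat_mul_eq_zero A A' hA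
  have hexp : Mmat A A' k * A
      = aCoeff A A' k • A - A * adjK k A A' * A := by
    unfold Mmat adjK
    rw [Matrix.sum_mul, Matrix.mul_sum, Matrix.sum_mul]
    rw [Finset.sum_range_succ'
      (fun i => (((-1 : R) ^ i * aCoeff A A' (k - i)) • (A * A') ^ i) * A) k]
    have h1 : ∀ i, (((-1 : R) ^ (i + 1) * aCoeff A A' (k - (i + 1))) • (A * A') ^ (i + 1)) * A
        = -((((-1 : R) ^ i * aCoeff A A' (k - 1 - i)) • ((A * A') ^ (i + 1) * A))) := by
      intro i
      rw [Matrix.smul_mul]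
      have : (k - (i + 1)) = k - 1 - i := by omega
      rw [this, pow_succ (-1 : R), ← neg_smul]
      ring_nf
    have h2 : ∀ i, (A * (((-1 : R) ^ i * aCoeff A A' (k - 1 - i)) • ((A' * A) ^ i * A'))) * A
        = ((-1 : R) ^ i * aCoeff A A' (k - 1 - i)) • ((A * A') ^ (i + 1) * A) := by
      intro i
      rw [Matrix.mul_smul, Matrix.smul_mul]
      congr 1
      rw [← Matrix.mul_assoc A ((A' * A) ^ i) A', mul_pow_comm A A' i, pow_succ]
      simp only [Matrix.mul_assoc]
    simp_rw [h1, h2]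
    rw [Finset.sum_neg_distrib]
    have h3 : (((-1 : R) ^ 0 * aCoeff A A' (k - 0)) • (A * A') ^ 0) * A
        = aCoeff A A' k • A := by
      simp
    rw [h3]
    abel
  rw [hexp] at hM
  have := sub_eq_zero.mp hM
  exact this.symm
end

section
/- Let R be a commutative ring, A ∈ R^{m×n}, A° ∈ R^{n×m}, and let a_j denote the coefficient of Z^j in det(I_m + Z·(A·A°)). Assume D_{k+1}(A) = 0, D_{k+1}(A°) = 0, and a_k is a unit of R (so that A and A° are crossed of rank k). Then ψ := a_k⁻¹ · (a_{k−1}·A° − a_{k−2}·A°·A·A° + ⋯ + (−1)^{k−1}·(A°·A)^{k−1}·A°) ∈ R^{n×m} satisfies A·ψ·A = A, ψ·A·ψ = ψ, A°·A·ψ = A°, and ψ·A·A° = A°. Moreover A·ψ is the idempotent matrix giving the projection of R^m onto the range of A along the kernel of A°, and ψ·A is the idempotent matrix giving the projection of R^n onto the range of A° along the kernel of A. -/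
open Matrix Polynomial

section Aux

variable {R : Type*} [CommRing R] {m n : ℕ}

/-- If the determinantal ideal vanishes, then *every* `K × K` submatrix determinant
(with arbitrary, not necessarily strictly monotone, index maps) is zero. -/
lemma detIdeal_minor_zero {K : ℕ} {A : Matrix (Fin m) (Fin n) R}
    (hA : detIdeal K A = ⊥) (α : Fin K → Fin m) (β : Fin K → Fin n) :
    (A.submatrix α β).det = 0 := by
  classical
  by_cases hα : Function.Injective α
  · by_cases hβ : Function.Injective β
    · set σ := Tuple.sort α with hσ
      set τ := Tuple.sort β with hτ
      have hmα : StrictMono (α ∘ σ) :=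
        (Tuple.monotone_sort α).strictMono_of_injective (hα.comp σ.injective)
      have hmβ : StrictMono (β ∘ τ) :=
        (Tuple.monotone_sort β).strictMono_of_injective (hβ.comp τ.injective)
      have hz : (A.submatrix (α ∘ σ) (β ∘ τ)).det = 0 := by
        have hm : (A.submatrix (α ∘ σ) (β ∘ τ)).det ∈ detIdeal K A :=
          Ideal.subset_span ⟨α ∘ σ, β ∘ τ, hmα, hmβ, rfl⟩
        rw [hA] at hm
        simpa using hm
      have h1 : A.submatrix (α ∘ σ) (β ∘ τ)
          = ((A.submatrix α β).submatrix σ id).submatrix id τ := rfl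
      rw [h1, Matrix.det_permute', Matrix.det_permute] at hz
      rcases Int.units_eq_one_or (Equiv.Perm.sign σ) with h | h <;>
        rcases Int.units_eq_one_or (Equiv.Perm.sign τ) with h' | h' <;>
        simp [h, h', neg_eq_zero] at hz <;> exact hz
    · rw [Function.not_injective_iff] at hβ
      obtain ⟨i, j, hij, hne⟩ := hβ
      rw [← Matrix.det_transpose, Matrix.transpose_submatrix]
      exact Matrix.det_zero_of_row_eq hne (by funext x; simp [hij])
  · rw [Function.not_injective_iff] at hα
    obtain ⟨i, j, hij, hne⟩ := hα
    exact Matrix.det_zero_of_row_eq hne (by funext x; simp [hij])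

/-- Cauchy–Binet-lite: a `K × K` determinant of a matrix whose columns are linear
combinations of columns of `A` (rows picked via `ρ`) vanishes if all `K`-minors of `A` do. -/
lemma det_combination_zero {K : ℕ} {A : Matrix (Fin m) (Fin n) R}
    (hA : ∀ (α : Fin K → Fin m) (β : Fin K → Fin n), (A.submatrix α β).det = 0)
    {ι : Type*} [Fintype ι] [DecidableEq ι] (hcard : Fintype.card ι = K)
    (ρ : ι → Fin m) (c : ι → Fin n → R) :
    (Matrix.of fun a b : ι => ∑ u, A (ρ a) u * c b u).det = 0 := by
  classical
  set F := (Matrix.detRowAlternating :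
      (ι → R) [⋀^ι]→ₗ[R] R).toMultilinearMap with hF
  set g : Fin n → ι → R := fun u a => A (ρ a) u with hg
  rw [← Matrix.det_transpose]
  have h1 : (Matrix.of fun a b : ι => ∑ u, A (ρ a) u * c b u)ᵀ
      = Matrix.of fun b : ι => ∑ u : Fin n, c b u • g u := by
    ext b a
    simp [hg, Finset.sum_apply, mul_comm]
  rw [h1]
  have h2 : (Matrix.of fun b : ι => ∑ u : Fin n, c b u • g u).det
      = F fun b : ι => ∑ u : Fin n, c b u • g u := rfl
  rw [h2, F.map_sum fun b u => c b u • g u]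
  apply Finset.sum_eq_zero
  intro p _
  have h3 : (F fun b : ι => c b (p b) • g (p b))
      = (∏ b : ι, c b (p b)) • F fun b : ι => g (p b) :=
    F.map_smul_univ (fun b => c b (p b)) fun b => g (p b)
  rw [h3]
  have h4 : (F fun b : ι => g (p b)) = 0 := by
    have h5 : (F fun b : ι => g (p b)) = ((A.submatrix ρ p)ᵀ).det := by
      congr 1
    rw [h5, Matrix.det_transpose]
    set e := (Fintype.equivFinOfCardEq hcard).symm with he
    rw [← Matrix.det_submatrix_equiv_self e, Matrix.submatrix_submatrix]
    exact hA _ _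
  rw [h4, smul_zero]

/-- Block reduction: if all columns outside `T` are the corresponding unit columns,
the determinant equals the determinant of the `T × T` submatrix. -/
lemma det_eq_det_subtype {M : Matrix (Fin m) (Fin m) R} {T : Finset (Fin m)}
    (h : ∀ j ∉ T, ∀ i, M i j = if i = j then 1 else 0) :
    M.det = (Matrix.of fun a b : {x // x ∈ T} => M a b).det := by
  classical
  rw [← Matrix.det_submatrix_equiv_self (Equiv.sumCompl (· ∈ T)) M]
  have hM : M.submatrix (Equiv.sumCompl (· ∈ T)) (Equiv.sumCompl (· ∈ T))
      = Matrix.fromBlocks (Matrix.of fun a b : {x // x ∈ T} => M a b) 0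
        (Matrix.of fun (a : {x // ¬ x ∈ T}) (b : {x // x ∈ T}) => M a b) 1 := by
    ext i j
    rcases i with a | a <;> rcases j with b | b <;>
      simp only [Matrix.submatrix_apply, Equiv.sumCompl_apply_inl, Equiv.sumCompl_apply_inr,
        Matrix.fromBlocks_apply₁₁, Matrix.fromBlocks_apply₁₂, Matrix.fromBlocks_apply₂₁,
        Matrix.fromBlocks_apply₂₂, Matrix.of_apply, Matrix.zero_apply, Matrix.one_apply]
    · have hab : (a : Fin m) ≠ (b : Fin m) := by
        intro hc
        exact b.2 (hc ▸ a.2)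
      rw [h b b.2 a, if_neg hab]
    · rw [h b b.2 a]
      by_cases hab : a = b
      · simp [hab]
      · rw [if_neg (fun hc => hab (Subtype.ext hc)), if_neg hab]
  rw [hM, Matrix.det_fromBlocks_zero₁₂, Matrix.det_one, mul_one]

end Aux
section Key

variable {R : Type*} [CommRing R] {m n : ℕ}

/-- Key vanishing: the `k`-th coefficient of the Cramer determinant vanishes when all
`(k+1)`-minors of `A` vanish. -/
lemma keyVanish {k : ℕ} (A : Matrix (Fin m) (Fin n) R) (A' : Matrix (Fin n) (Fin m) R)
    (hA : detIdeal (k + 1) A = ⊥) (s : Fin m) (t : Fin n) :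
    ((((1 : Matrix (Fin m) (Fin m) R[X]) + (X : R[X]) • (A * A').map C).updateCol s
        fun u => C (A u t)).det).coeff k = 0 := by
  classical
  set B := A * A' with hB
  set F := (Matrix.detRowAlternating :
      (Fin m → R[X]) [⋀^Fin m]→ₗ[R[X]] R[X]).toMultilinearMap with hF
  set w : Fin m → Fin m → R[X] := fun j i => if j = s then 0 else X * C (B i j) with hw
  set r : Fin m → Fin m → R[X] :=
    fun j i => if j = s then C (A i t) else if i = j then 1 else 0 with hr
  have hNT : (((1 : Matrix (Fin m) (Fin m) R[X]) + (X : R[X]) • B.map C).updateCol s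
      fun u => C (A u t)) = (Matrix.of (w + r))ᵀ := by
    ext i j
    simp only [Matrix.transpose_apply, Matrix.of_apply, Pi.add_apply, hw, hr,
      Matrix.updateCol_apply, Matrix.add_apply, Matrix.smul_apply, Matrix.map_apply,
      Matrix.one_apply, smul_eq_mul]
    by_cases hj : j = s <;> simp [hj, add_comm]
  rw [hNT, Matrix.det_transpose]
  have hdet : (Matrix.of (w + r)).det = F (w + r) := rfl
  rw [hdet, F.map_add_univ w r, Polynomial.finset_sum_coeff]
  apply Finset.sum_eq_zero
  intro S _
  by_cases hsS : s ∈ S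
  · have h0 : S.piecewise w r s = 0 := by
      rw [Finset.piecewise_eq_of_mem _ _ _ hsS]
      funext i
      simp [hw]
    rw [F.map_coord_zero s h0, Polynomial.coeff_zero]
  · set M₀ : Matrix (Fin m) (Fin m) R := Matrix.of fun i j =>
      if j = s then A i t else if j ∈ S then B i j else if i = j then 1 else 0 with hM₀
    set m₀ : Fin m → Fin m → R[X] := fun j i => C (M₀ i j) with hm₀
    have hpw : S.piecewise w r = S.piecewise (fun j => (X : R[X]) • m₀ j) m₀ := by
      funext j
      by_cases hj : j ∈ S
      · rw [Finset.piecewise_eq_of_mem _ _ _ hj, Finset.piecewise_eq_of_mem _ _ _ hj]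
        funext i
        have hjs : j ≠ s := fun h => hsS (h ▸ hj)
        simp [hw, hm₀, hM₀, hjs, hj, smul_eq_mul]
      · rw [Finset.piecewise_eq_of_notMem _ _ _ hj, Finset.piecewise_eq_of_notMem _ _ _ hj]
        funext i
        by_cases hjs : j = s <;> simp [hr, hm₀, hM₀, hjs, hj]
    rw [hpw]
    have hps : F (S.piecewise (fun j => (X : R[X]) • m₀ j) m₀)
        = (∏ _j ∈ S, (X : R[X])) • F m₀ :=
      F.map_piecewise_smul (fun _ => (X : R[X])) m₀ S
    rw [hps, Finset.prod_const]
    have hFm₀ : F m₀ = C M₀.det := by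
      have h1 : Matrix.of m₀ = (M₀.map C)ᵀ := by
        ext j i
        simp [hm₀]
      have h2 : F m₀ = (Matrix.of m₀).det := rfl
      rw [h2, h1, Matrix.det_transpose, RingHom.map_det]
      rfl
    rw [hFm₀, smul_eq_mul, mul_comm, Polynomial.C_mul_X_pow_eq_monomial,
      Polynomial.coeff_monomial]
    by_cases hcard : S.card = k
    · rw [if_pos hcard]
      set T : Finset (Fin m) := insert s S with hT
      have hcols : ∀ j ∉ T, ∀ i, M₀ i j = if i = j then 1 else 0 := by
        intro j hj i
        have hjs : j ≠ s := fun h => hj (h ▸ Finset.mem_insert_self s S)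
        have hjS : j ∉ S := fun h => hj (Finset.mem_insert_of_mem h)
        simp [hM₀, hjs, hjS]
      rw [det_eq_det_subtype hcols]
      have hcardT : Fintype.card {x // x ∈ T} = k + 1 := by
        rw [Fintype.card_coe, hT, Finset.card_insert_of_notMem hsS, hcard]
      have heq : (Matrix.of fun a b : {x // x ∈ T} => M₀ a b)
          = Matrix.of fun a b : {x // x ∈ T} =>
              ∑ u, A ((fun x : {x // x ∈ T} => (x : Fin m)) a) u *
                (fun b : {x // x ∈ T} =>
                  if (b : Fin m) = s then Pi.single t (1 : R) else fun u => A' u b) b u := by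
        ext a b
        simp only [Matrix.of_apply]
        rcases Finset.mem_insert.mp b.2 with hbs | hbS
        · rw [hM₀]
          simp only [Matrix.of_apply, hbs, if_pos]
          simp [Pi.single_apply, mul_ite, Finset.sum_ite_eq']
        · have hbs : (b : Fin m) ≠ s := fun h => hsS (h ▸ hbS)
          rw [hM₀]
          simp only [Matrix.of_apply, if_neg hbs, if_pos hbS, hB]
          simp [Matrix.mul_apply, hbs]
      rw [heq, det_combination_zero (detIdeal_minor_zero hA) hcardT]
    · rw [if_neg hcard]

end Key

section Closed

variable {R : Type*} [CommRing R] {m n : ℕ}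

lemma cramer_closed (A : Matrix (Fin m) (Fin n) R) (A' : Matrix (Fin n) (Fin m) R)
    (v : Fin m → R) (j : ℕ) :
    (fun s => ((((1 : Matrix (Fin m) (Fin m) R[X]) + (X : R[X]) • (A * A').map C).cramer
        fun u => C (v u)) s).coeff j)
      = ∑ i ∈ Finset.range (j + 1), ((-1 : R) ^ i * aCoeff A A' (j - i)) • ((A * A') ^ i *ᵥ v) := by
  classical
  set B := A * A' with hB
  set M : Matrix (Fin m) (Fin m) R[X] := 1 + (X : R[X]) • B.map C with hM
  set cr := M.cramer fun u => C (v u) with hcr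
  have haC : ∀ q, (M.det).coeff q = aCoeff A A' q := fun q => rfl
  have hentry : ∀ s : Fin m, cr s + X * (∑ u, C (B s u) * cr u) = M.det * C (v s) := by
    intro s
    have h1 := congrFun (Matrix.mulVec_cramer M fun u => C (v u)) s
    calc cr s + X * ∑ u, C (B s u) * cr u = (M *ᵥ cr) s := by
          simp only [Matrix.mulVec, dotProduct, hM, Matrix.add_apply, Matrix.one_apply,
            Matrix.smul_apply, Matrix.map_apply, smul_eq_mul, add_mul, Finset.sum_add_distrib,
            ite_mul, one_mul, zero_mul, Finset.sum_ite_eq, Finset.mem_univ, if_true,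
            Finset.mul_sum, mul_assoc]
        _ = M.det * C (v s) := by rw [← hcr] at h1; rw [h1]; simp [smul_eq_mul]
  have hd0 : (fun s => (cr s).coeff 0) = aCoeff A A' 0 • v := by
    funext s
    have h := congrArg (fun p => p.coeff 0) (hentry s)
    simp only [Polynomial.coeff_add, Polynomial.mul_coeff_zero, Polynomial.coeff_X_zero,
      zero_mul, add_zero, Polynomial.coeff_C, Polynomial.coeff_mul_C, haC] at h
    simpa using h
  have hdsucc : ∀ q, (fun s => (cr s).coeff (q + 1))
      = aCoeff A A' (q + 1) • v - B *ᵥ fun s => (cr s).coeff q := by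
    intro q
    funext s
    have h := congrArg (fun p => p.coeff (q + 1)) (hentry s)
    simp only [Polynomial.coeff_add, Polynomial.coeff_X_mul, Polynomial.finset_sum_coeff,
      Polynomial.coeff_C_mul, Polynomial.coeff_mul_C, haC] at h
    have h2 : (B *ᵥ fun u => (cr u).coeff q) s = ∑ u, B s u * (cr u).coeff q := by
      simp [Matrix.mulVec, dotProduct]
    rw [Pi.sub_apply, Pi.smul_apply, smul_eq_mul, h2, eq_sub_iff_add_eq]
    exact h
  induction j with
  | zero =>
      rw [hd0]
      simp [Finset.sum_range_one]
  | succ q ih =>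
      rw [hdsucc q, ih, Finset.sum_range_succ' _ (q + 1)]
      have hlin : B *ᵥ (∑ i ∈ Finset.range (q + 1),
          ((-1 : R) ^ i * aCoeff A A' (q - i)) • (B ^ i *ᵥ v))
          = ∑ i ∈ Finset.range (q + 1),
            ((-1 : R) ^ i * aCoeff A A' (q - i)) • (B ^ (i + 1) *ᵥ v) := by
        have := map_sum B.mulVecLin
          (fun i => ((-1 : R) ^ i * aCoeff A A' (q - i)) • (B ^ i *ᵥ v)) (Finset.range (q + 1))
        simp only [Matrix.mulVecLin_apply, _root_.map_smul] at this
        rw [this]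
        refine Finset.sum_congr rfl fun i _ => ?_
        rw [Matrix.mulVec_mulVec, ← pow_succ']
      rw [hlin]
      have hterm : ∀ i, ((-1 : R) ^ (i + 1) * aCoeff A A' (q + 1 - (i + 1))) • (B ^ (i + 1) *ᵥ v)
          = -(((-1 : R) ^ i * aCoeff A A' (q - i)) • (B ^ (i + 1) *ᵥ v)) := by
        intro i
        have : q + 1 - (i + 1) = q - i := by omega
        rw [this, ← neg_smul]
        congr 1
        ring
      rw [Finset.sum_congr rfl fun i _ => hterm i, Finset.sum_neg_distrib]
      simp only [pow_zero, one_mul, Nat.sub_zero, pow_zero, Matrix.one_mulVec]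
      abel

end Closed
section KeySum

variable {R : Type*} [CommRing R] {m n k : ℕ}

lemma key_sum (A : Matrix (Fin m) (Fin n) R) (A' : Matrix (Fin n) (Fin m) R)
    (hA : detIdeal (k + 1) A = ⊥) :
    ∑ i ∈ Finset.range (k + 1), ((-1 : R) ^ i * aCoeff A A' (k - i)) • ((A * A') ^ i * A)
      = 0 := by
  classical
  ext s t
  have hclosed := congrFun (cramer_closed A A' (fun u => A u t) k) s
  rw [Matrix.cramer_apply, keyVanish A A' hA s t] at hclosed
  simp only [Finset.sum_apply, Pi.smul_apply, smul_eq_mul, Matrix.mulVec,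
    dotProduct] at hclosed
  simp only [Matrix.sum_apply, Matrix.zero_apply, Matrix.smul_apply, Matrix.mul_apply,
    smul_eq_mul]
  exact hclosed.symm

lemma aCoeff_comm (A : Matrix (Fin m) (Fin n) R) (A' : Matrix (Fin n) (Fin m) R) (j : ℕ) :
    aCoeff A A' j = aCoeff A' A j := by
  unfold aCoeff
  congr 1
  have h1 : (1 : Matrix (Fin m) (Fin m) R[X]) + (X : R[X]) • (A * A').map C
      = 1 + A.map C * ((X : R[X]) • A'.map C) := by
    rw [Matrix.map_mul (f := (C : R →+* R[X])), Matrix.mul_smul]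
  have h2 : (1 : Matrix (Fin n) (Fin n) R[X]) + (X : R[X]) • (A' * A).map C
      = 1 + ((X : R[X]) • A'.map C) * A.map C := by
    rw [Matrix.map_mul (f := (C : R →+* R[X])), Matrix.smul_mul]
  rw [h1, h2, Matrix.det_one_add_mul_comm]

lemma shifted_sum (A : Matrix (Fin m) (Fin n) R) (A' : Matrix (Fin n) (Fin m) R)
    (hA : detIdeal (k + 1) A = ⊥) :
    aCoeff A A' k • A
      = ∑ i ∈ Finset.range k,
          ((-1 : R) ^ i * aCoeff A A' (k - 1 - i)) • ((A * A') ^ (i + 1) * A) := by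
  have h := key_sum A A' hA
  rw [Finset.sum_range_succ' _ k] at h
  simp only [pow_zero, one_mul, Nat.sub_zero, Matrix.one_mul] at h
  have hterm : ∀ i ∈ Finset.range k,
      ((-1 : R) ^ (i + 1) * aCoeff A A' (k - (i + 1))) • ((A * A') ^ (i + 1) * A)
      = -(((-1 : R) ^ i * aCoeff A A' (k - 1 - i)) • ((A * A') ^ (i + 1) * A)) := by
    intro i _
    have he : k - (i + 1) = k - 1 - i := by omega
    rw [he, ← neg_smul]
    congr 1
    ring
  rw [Finset.sum_congr rfl hterm, Finset.sum_neg_distrib] at h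
  exact (neg_add_eq_zero.mp h).symm

end KeySum

section MulLemmas

variable {R : Type*} [CommRing R] {m n k : ℕ}

lemma semiconjA (A : Matrix (Fin m) (Fin n) R) (A' : Matrix (Fin n) (Fin m) R) (i : ℕ) :
    A * (A' * A) ^ i = (A * A') ^ i * A := by
  induction i with
  | zero => simp
  | succ i ih =>
      rw [pow_succ, pow_succ, ← Matrix.mul_assoc, ih]
      simp only [Matrix.mul_assoc]

lemma semiconjA' (A : Matrix (Fin m) (Fin n) R) (A' : Matrix (Fin n) (Fin m) R) (i : ℕ) :
    A' * (A * A') ^ i = (A' * A) ^ i * A' := by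
  induction i with
  | zero => simp
  | succ i ih =>
      rw [pow_succ, pow_succ, ← Matrix.mul_assoc, ih]
      simp only [Matrix.mul_assoc]

lemma adjK_mul₁ (A : Matrix (Fin m) (Fin n) R) (A' : Matrix (Fin n) (Fin m) R)
    (hA : detIdeal (k + 1) A = ⊥) :
    A * adjK k A A' * A = aCoeff A A' k • A := by
  rw [shifted_sum A A' hA, adjK, Matrix.mul_sum, Matrix.sum_mul]
  refine Finset.sum_congr rfl fun i _ => ?_
  rw [Matrix.mul_smul, Matrix.smul_mul]
  congr 1
  rw [← Matrix.mul_assoc, semiconjA A A' i, Matrix.mul_assoc ((A * A') ^ i) A A', ← pow_succ]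

lemma adjK_mul₂ (A : Matrix (Fin m) (Fin n) R) (A' : Matrix (Fin n) (Fin m) R)
    (hA' : detIdeal (k + 1) A' = ⊥) :
    adjK k A A' * A * A' = aCoeff A A' k • A' := by
  have h := shifted_sum A' A hA'
  simp only [aCoeff_comm A' A] at h
  rw [adjK, Matrix.sum_mul, Matrix.sum_mul]
  rw [h]
  refine Finset.sum_congr rfl fun i _ => ?_
  rw [Matrix.smul_mul, Matrix.smul_mul]
  congr 1
  rw [Matrix.mul_assoc ((A' * A) ^ i) A' A, ← pow_succ]

lemma adjK_mul₂' (A : Matrix (Fin m) (Fin n) R) (A' : Matrix (Fin n) (Fin m) R)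
    (hA' : detIdeal (k + 1) A' = ⊥) :
    A' * A * adjK k A A' = aCoeff A A' k • A' := by
  have h := shifted_sum A' A hA'
  simp only [aCoeff_comm A' A] at h
  rw [adjK, Matrix.mul_sum]
  rw [h]
  refine Finset.sum_congr rfl fun i _ => ?_
  rw [Matrix.mul_smul]
  congr 1
  rw [← Matrix.mul_assoc, ← pow_succ']

lemma adjK_mul₃ (A : Matrix (Fin m) (Fin n) R) (A' : Matrix (Fin n) (Fin m) R)
    (hA' : detIdeal (k + 1) A' = ⊥) :
    adjK k A A' * A * adjK k A A' = aCoeff A A' k • adjK k A A' := by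
  have h2b := adjK_mul₂' A A' hA'
  calc adjK k A A' * A * adjK k A A'
      = ∑ i ∈ Finset.range k, ((-1 : R) ^ i * aCoeff A A' (k - 1 - i)) •
          ((A' * A) ^ i * (A' * A * adjK k A A')) := by
        nth_rewrite 1 [adjK]
        rw [Matrix.sum_mul, Matrix.sum_mul]
        refine Finset.sum_congr rfl fun i _ => ?_
        rw [Matrix.smul_mul, Matrix.smul_mul]
        congr 1
        simp only [Matrix.mul_assoc]
    _ = aCoeff A A' k • adjK k A A' := by
        rw [h2b, adjK, Finset.smul_sum]
        refine Finset.sum_congr rfl fun i _ => ?_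
        rw [Matrix.mul_smul, smul_comm]

lemma adjK_eq_mul_right (A : Matrix (Fin m) (Fin n) R) (A' : Matrix (Fin n) (Fin m) R) :
    adjK k A A' = (∑ i ∈ Finset.range k,
      ((-1 : R) ^ i * aCoeff A A' (k - 1 - i)) • (A' * A) ^ i) * A' := by
  rw [adjK, Matrix.sum_mul]
  exact Finset.sum_congr rfl fun i _ => (Matrix.smul_mul _ _ _).symm

lemma adjK_eq_mul_left (A : Matrix (Fin m) (Fin n) R) (A' : Matrix (Fin n) (Fin m) R) :
    adjK k A A' = A' * ∑ i ∈ Finset.range k,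
      ((-1 : R) ^ i * aCoeff A A' (k - 1 - i)) • (A * A') ^ i := by
  rw [adjK, Matrix.mul_sum]
  refine Finset.sum_congr rfl fun i _ => ?_
  rw [Matrix.mul_smul]
  congr 1
  exact (semiconjA' A A' i).symm

end MulLemmas

theorem stmt16 {R : Type*} [CommRing R] {m n k : ℕ}
    (A : Matrix (Fin m) (Fin n) R) (A' : Matrix (Fin n) (Fin m) R)
    (hA : detIdeal (k + 1) A = ⊥) (hA' : detIdeal (k + 1) A' = ⊥)
    (ha : IsUnit (aCoeff A A' k)) :
    A * ((↑ha.unit⁻¹ : R) • adjK k A A') * A = A ∧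
    ((↑ha.unit⁻¹ : R) • adjK k A A') * A * ((↑ha.unit⁻¹ : R) • adjK k A A') =
      (↑ha.unit⁻¹ : R) • adjK k A A' ∧
    A' * A * ((↑ha.unit⁻¹ : R) • adjK k A A') = A' ∧
    ((↑ha.unit⁻¹ : R) • adjK k A A') * A * A' = A' ∧
    (A * ((↑ha.unit⁻¹ : R) • adjK k A A')) * (A * ((↑ha.unit⁻¹ : R) • adjK k A A')) =
      A * ((↑ha.unit⁻¹ : R) • adjK k A A') ∧
    LinearMap.range (A * ((↑ha.unit⁻¹ : R) • adjK k A A')).mulVecLin =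
      LinearMap.range A.mulVecLin ∧
    LinearMap.ker (A * ((↑ha.unit⁻¹ : R) • adjK k A A')).mulVecLin =
      LinearMap.ker A'.mulVecLin ∧
    (((↑ha.unit⁻¹ : R) • adjK k A A') * A) * (((↑ha.unit⁻¹ : R) • adjK k A A') * A) =
      ((↑ha.unit⁻¹ : R) • adjK k A A') * A ∧
    LinearMap.range (((↑ha.unit⁻¹ : R) • adjK k A A') * A).mulVecLin =
      LinearMap.range A'.mulVecLin ∧
    LinearMap.ker (((↑ha.unit⁻¹ : R) • adjK k A A') * A).mulVecLin =
      LinearMap.ker A.mulVecLin := by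
  classical
  have hr : (↑ha.unit⁻¹ : R) * aCoeff A A' k = 1 := ha.val_inv_mul
  have h1 := adjK_mul₁ A A' hA
  have h2 := adjK_mul₂ A A' hA'
  have h2b := adjK_mul₂' A A' hA'
  have h3 := adjK_mul₃ A A' hA'
  have hfr := adjK_eq_mul_right (k := k) A A'
  have hfl := adjK_eq_mul_left (k := k) A A'
  set a : R := aCoeff A A' k with hadef
  set r : R := (↑ha.unit⁻¹ : R) with hrdef
  set θ : Matrix (Fin n) (Fin m) R := adjK k A A' with hθdef
  set ψ : Matrix (Fin n) (Fin m) R := r • θ with hψdef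
  set N₁ : Matrix (Fin n) (Fin n) R :=
    ∑ i ∈ Finset.range k, ((-1 : R) ^ i * aCoeff A A' (k - 1 - i)) • (A' * A) ^ i with hN₁
  set N₂ : Matrix (Fin m) (Fin m) R :=
    ∑ i ∈ Finset.range k, ((-1 : R) ^ i * aCoeff A A' (k - 1 - i)) • (A * A') ^ i with hN₂
  have E1 : A * ψ * A = A := by
    rw [hψdef, Matrix.mul_smul, Matrix.smul_mul, h1, smul_smul, hr, one_smul]
  have E2 : ψ * A * ψ = ψ := by
    rw [hψdef, Matrix.smul_mul, Matrix.smul_mul, Matrix.mul_smul, h3, smul_smul, smul_smul,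
      mul_assoc, hr, mul_one]
  have E3 : A' * A * ψ = A' := by
    rw [hψdef, Matrix.mul_smul, h2b, smul_smul, hr, one_smul]
  have E4 : ψ * A * A' = A' := by
    rw [hψdef, Matrix.smul_mul, Matrix.smul_mul, h2, smul_smul, hr, one_smul]
  have E5 : (A * ψ) * (A * ψ) = A * ψ := by
    rw [← Matrix.mul_assoc, E1]
  have E8 : (ψ * A) * (ψ * A) = ψ * A := by
    rw [← Matrix.mul_assoc, E2]
  have hrange1 : LinearMap.range (A * ψ).mulVecLin = LinearMap.range A.mulVecLin := by
    apply le_antisymm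
    · intro y hy
      obtain ⟨x, rfl⟩ := LinearMap.mem_range.mp hy
      refine LinearMap.mem_range.mpr ⟨ψ *ᵥ x, ?_⟩
      rw [Matrix.mulVecLin_apply, Matrix.mulVecLin_apply, Matrix.mulVec_mulVec]
    · intro y hy
      obtain ⟨x, rfl⟩ := LinearMap.mem_range.mp hy
      refine LinearMap.mem_range.mpr ⟨A *ᵥ x, ?_⟩
      rw [Matrix.mulVecLin_apply, Matrix.mulVecLin_apply, Matrix.mulVec_mulVec, E1]
  have hker1 : LinearMap.ker (A * ψ).mulVecLin = LinearMap.ker A'.mulVecLin := by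
    ext x
    simp only [LinearMap.mem_ker, Matrix.mulVecLin_apply]
    constructor
    · intro h
      have hx : A' *ᵥ ((A * ψ) *ᵥ x) = 0 := by rw [h, Matrix.mulVec_zero]
      rw [Matrix.mulVec_mulVec, ← Matrix.mul_assoc, E3] at hx
      exact hx
    · intro h
      rw [hψdef, hfr, Matrix.mul_smul, Matrix.smul_mulVec, ← Matrix.mul_assoc,
        ← Matrix.mulVec_mulVec, h, Matrix.mulVec_zero, smul_zero]
  have hfactor : ψ * A = A' * (r • (N₂ * A)) := by
    rw [hψdef, Matrix.smul_mul, hfl, Matrix.mul_assoc, Matrix.mul_smul]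
  have hrange2 : LinearMap.range (ψ * A).mulVecLin = LinearMap.range A'.mulVecLin := by
    apply le_antisymm
    · intro y hy
      obtain ⟨x, rfl⟩ := LinearMap.mem_range.mp hy
      refine LinearMap.mem_range.mpr ⟨(r • (N₂ * A)) *ᵥ x, ?_⟩
      rw [Matrix.mulVecLin_apply, Matrix.mulVecLin_apply, Matrix.mulVec_mulVec, ← hfactor]
    · intro y hy
      obtain ⟨x, rfl⟩ := LinearMap.mem_range.mp hy
      refine LinearMap.mem_range.mpr ⟨A' *ᵥ x, ?_⟩
      rw [Matrix.mulVecLin_apply, Matrix.mulVecLin_apply, Matrix.mulVec_mulVec, E4]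
  have hker2 : LinearMap.ker (ψ * A).mulVecLin = LinearMap.ker A.mulVecLin := by
    ext x
    simp only [LinearMap.mem_ker, Matrix.mulVecLin_apply]
    constructor
    · intro h
      have hx : A *ᵥ ((ψ * A) *ᵥ x) = 0 := by rw [h, Matrix.mulVec_zero]
      rw [Matrix.mulVec_mulVec, ← Matrix.mul_assoc, E1] at hx
      exact hx
    · intro h
      rw [← Matrix.mulVec_mulVec, h, Matrix.mulVec_zero]
  exact ⟨E1, E2, E3, E4, E5, hrange1, hker1, E8, hrange2, hker2⟩
end

section
/- Let R be a commutative ring and A ∈ R^{m×n}, with φ : R^n → R^m the linear map x ↦ A·x. The following are equivalent: (a) the range of φ is a direct summand of R^m; (b) the quotient module R^m / (range φ) is a projective R-module; (e) there exists B ∈ R^{n×m} with A·B·A = A; (f) there exists B ∈ R^{n×m} with A·B·A = A and B·A·B = B; (g) for every k, the determinantal ideal D_k(A) is idempotent, i.e. D_k(A)·D_k(A) = D_k(A). -/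
open Matrix

namespace Stmt18Aux

open Finset

variable {R : Type*} [CommRing R]

local instance strictMonoDec {k l : ℕ} : DecidablePred (StrictMono : (Fin k → Fin l) → Prop) :=
  fun _ => decidable_of_iff (∀ a b, a < b → _ < _) Iff.rfl

/-! ### Sorting an injective function -/

section sorting

variable {k l : ℕ}

lemma card_image_univ (f : Fin k → Fin l) (hf : Function.Injective f) : (Finset.univ.image f).card = k := by
  rw [Finset.card_image_of_injective _ hf, card_univ, Fintype.card_fin]

noncomputable def monoPart (f : Fin k → Fin l) (hf : Function.Injective f) : Fin k → Fin l :=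
  (Finset.univ.image f).orderEmbOfFin (card_image_univ f hf)

lemma monoPart_strictMono (f : Fin k → Fin l) (hf : Function.Injective f) : StrictMono (monoPart f hf) :=
  ((Finset.univ.image f).orderEmbOfFin (card_image_univ f hf)).strictMono

noncomputable def permPart (f : Fin k → Fin l) (hf : Function.Injective f) : Equiv.Perm (Fin k) :=
  Equiv.ofBijective
    (fun i => ((Finset.univ.image f).orderIsoOfFin (card_image_univ f hf)).symm
      ⟨f i, Finset.mem_image_of_mem f (mem_univ i)⟩)
    (by
      refine Finite.injective_iff_bijective.mp ?_
      intro a b hab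
      apply hf
      have := congrArg (((Finset.univ.image f).orderIsoOfFin (card_image_univ f hf))) hab
      simpa [Subtype.ext_iff] using this)

lemma monoPart_comp_permPart (f : Fin k → Fin l) (hf : Function.Injective f) : monoPart f hf ∘ permPart f hf = f := by
  funext i
  show (Finset.univ.image f).orderEmbOfFin (card_image_univ f hf) _ = f i
  rw [← Finset.coe_orderIsoOfFin_apply]
  show ((((Finset.univ.image f).orderIsoOfFin (card_image_univ f hf))
    ((((Finset.univ.image f).orderIsoOfFin (card_image_univ f hf))).symm
      ⟨f i, Finset.mem_image_of_mem f (mem_univ i)⟩) : _) : Fin l) = f i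
  rw [OrderIso.apply_symm_apply]

lemma monoPart_eq {g : Fin k → Fin l} (hg : StrictMono g) (σ : Equiv.Perm (Fin k)) :
    monoPart (g ∘ σ) (hg.injective.comp σ.injective) = g := by
  have himg : ∀ i, g i ∈ Finset.univ.image (g ∘ σ) := by
    intro i
    refine Finset.mem_image.mpr ⟨σ.symm i, mem_univ _, by simp⟩
  exact (Finset.orderEmbOfFin_unique _ himg hg).symm

lemma permPart_eq {g : Fin k → Fin l} (hg : StrictMono g) (σ : Equiv.Perm (Fin k)) :
    permPart (g ∘ σ) (hg.injective.comp σ.injective) = σ := by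
  have h1 := monoPart_comp_permPart (g ∘ σ) (hg.injective.comp σ.injective)
  rw [monoPart_eq hg σ] at h1
  exact Equiv.coe_fn_injective (by funext i; exact hg.injective (congrFun h1 i))

end sorting

/-! ### Cauchy–Binet -/

theorem sum_injective_eq {M : Type*} [AddCommMonoid M] {k l : ℕ} (T : (Fin k → Fin l) → M) :
    ∑ f ∈ univ.filter (fun f : Fin k → Fin l => Function.Injective f), T f
      = ∑ g ∈ univ.filter (fun g : Fin k → Fin l => StrictMono g),
          ∑ σ : Equiv.Perm (Fin k), T (g ∘ σ) := by
  classical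
  rw [Finset.sum_sigma']
  refine Finset.sum_bij'
    (fun f hf => (⟨monoPart f (by simpa using (Finset.mem_filter.mp hf).2),
                  permPart f (by simpa using (Finset.mem_filter.mp hf).2)⟩ :
                  (_ : Fin k → Fin l) × Equiv.Perm (Fin k)))
    (fun x _ => x.1 ∘ x.2)
    ?_ ?_ ?_ ?_ ?_
  · intro f hf
    simp only [Finset.mem_sigma, Finset.mem_filter, Finset.mem_univ, true_and]
    exact ⟨monoPart_strictMono _ _, trivial⟩
  · rintro ⟨g, σ⟩ hx
    simp only [Finset.mem_sigma, Finset.mem_filter, Finset.mem_univ, true_and] at hx ⊢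
    exact hx.1.injective.comp σ.injective
  · intro f hf
    exact monoPart_comp_permPart f (by simpa using (Finset.mem_filter.mp hf).2)
  · rintro ⟨g, σ⟩ hx
    simp only [Finset.mem_sigma, Finset.mem_filter, Finset.mem_univ, true_and] at hx
    obtain ⟨hg, -⟩ := hx
    have h1 : monoPart (g ∘ σ) (hg.injective.comp σ.injective) = g := monoPart_eq hg σ
    have h2 : permPart (g ∘ σ) (hg.injective.comp σ.injective) = σ := permPart_eq hg σ
    exact Sigma.ext h1 (heq_of_eq h2)
  · intro f hf
    rw [monoPart_comp_permPart f (by simpa using (Finset.mem_filter.mp hf).2)]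

theorem det_mul_expand {k l : ℕ} (X : Matrix (Fin k) (Fin l) R) (Y : Matrix (Fin l) (Fin k) R) :
    det (X * Y) = ∑ f : Fin k → Fin l, (∏ i, X i (f i)) * det (Y.submatrix f id) := by
  classical
  have h : det (X * Y)
      = (detRowAlternating : (Fin k → R) [⋀^Fin k]→ₗ[R] R).toMultilinearMap
        (fun i => ∑ t : Fin l, X i t • Y t) := by
    show det (X * Y) = det (Matrix.of fun i => ∑ t : Fin l, X i t • Y t)
    congr 1
    ext i j
    simp [Matrix.mul_apply, Finset.sum_apply]
  rw [h, MultilinearMap.map_sum]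
  refine Finset.sum_congr rfl fun f _ => ?_
  rw [MultilinearMap.map_smul_univ]
  rfl

theorem det_mul_expand_inj {k l : ℕ} (X : Matrix (Fin k) (Fin l) R) (Y : Matrix (Fin l) (Fin k) R) :
    det (X * Y) = ∑ f ∈ univ.filter (fun f : Fin k → Fin l => Function.Injective f),
      (∏ i, X i (f i)) * det (Y.submatrix f id) := by
  classical
  rw [det_mul_expand]
  symm
  apply Finset.sum_subset (Finset.filter_subset _ _)
  intro f _ hf
  simp only [Finset.mem_filter, Finset.mem_univ, true_and] at hf
  rw [Function.not_injective_iff] at hf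
  obtain ⟨a, b, hab, hne⟩ := hf
  rw [Matrix.det_zero_of_row_eq hne (by funext j; simp [Matrix.submatrix_apply, hab]), mul_zero]

theorem cauchyBinet {k l : ℕ} (X : Matrix (Fin k) (Fin l) R) (Y : Matrix (Fin l) (Fin k) R) :
    det (X * Y) = ∑ g ∈ univ.filter (fun g : Fin k → Fin l => StrictMono g),
      det (X.submatrix id g) * det (Y.submatrix g id) := by
  classical
  rw [det_mul_expand_inj, sum_injective_eq fun f => (∏ i, X i (f i)) * det (Y.submatrix f id)]
  refine Finset.sum_congr rfl fun g hg => ?_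
  have hdet : det (X.submatrix id g)
      = ∑ σ : Equiv.Perm (Fin k), (Equiv.Perm.sign σ : R) * ∏ i, X i (g (σ i)) := by
    rw [← Matrix.det_transpose, Matrix.det_apply']
    refine Finset.sum_congr rfl fun σ _ => ?_
    simp [Matrix.transpose_apply, Matrix.submatrix_apply]
  rw [hdet, Finset.sum_mul]
  refine Finset.sum_congr rfl fun σ _ => ?_
  have h1 : Y.submatrix (g ∘ σ) id = (Y.submatrix g id).submatrix σ id := by
    ext i j; rfl
  rw [h1, Matrix.det_permute]
  simp only [Function.comp_apply]
  ring

/-! ### Basic properties of `detIdeal` -/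

variable {m n : ℕ}

theorem detIdeal_fg (k : ℕ) (A : Matrix (Fin m) (Fin n) R) : (detIdeal k A).FG := by
  rw [detIdeal]
  apply Submodule.fg_def.mpr
  refine ⟨_, ?_, rfl⟩
  have : {x | ∃ (α : Fin k → Fin m) (β : Fin k → Fin n),
      StrictMono α ∧ StrictMono β ∧ x = (A.submatrix α β).det}
    = (fun p : (Fin k → Fin m) × (Fin k → Fin n) => (A.submatrix p.1 p.2).det) ''
      {p | StrictMono p.1 ∧ StrictMono p.2} := by
    ext x
    constructor
    · rintro ⟨α, β, hα, hβ, rfl⟩; exact ⟨(α, β), ⟨hα, hβ⟩, rfl⟩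
    · rintro ⟨⟨α, β⟩, ⟨hα, hβ⟩, rfl⟩; exact ⟨α, β, hα, hβ, rfl⟩
  rw [this]
  exact Set.Finite.image _ (Set.toFinite _)

theorem detIdeal_zero (A : Matrix (Fin m) (Fin n) R) : detIdeal 0 A = ⊤ := by
  rw [Ideal.eq_top_iff_one, detIdeal]
  apply Ideal.subset_span
  exact ⟨Fin.elim0, Fin.elim0, fun a => a.elim0, fun a => a.elim0, by simp⟩

theorem detIdeal_eq_bot (k : ℕ) (hk : m < k) (A : Matrix (Fin m) (Fin n) R) :
    detIdeal k A = ⊥ := by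
  rw [detIdeal]
  convert Ideal.span_empty
  rw [Set.eq_empty_iff_forall_notMem]
  rintro x ⟨α, β, hα, hβ, rfl⟩
  have := Fintype.card_le_of_injective α hα.injective
  simp only [Fintype.card_fin] at this
  omega

/-- Any determinant of a `k × k` submatrix (with arbitrary index maps) lies in `detIdeal k A`. -/
theorem det_submatrix_mem (k : ℕ) (A : Matrix (Fin m) (Fin n) R)
    (ρ : Fin k → Fin m) (σ : Fin k → Fin n) :
    (A.submatrix ρ σ).det ∈ detIdeal k A := by
  classical
  by_cases hρ : Function.Injective ρ
  · by_cases hσ : Function.Injective σ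
    · have hρ' : ρ = monoPart ρ hρ ∘ permPart ρ hρ := (monoPart_comp_permPart ρ hρ).symm
      have hσ' : σ = monoPart σ hσ ∘ permPart σ hσ := (monoPart_comp_permPart σ hσ).symm
      have hsub : A.submatrix ρ σ
          = ((A.submatrix (monoPart ρ hρ) (monoPart σ hσ)).submatrix (permPart ρ hρ) id).submatrix
              id (permPart σ hσ) := by
        rw [Matrix.submatrix_submatrix, Matrix.submatrix_submatrix]
        nth_rewrite 1 [hρ', hσ']
        rfl
      rw [hsub, Matrix.det_permute', Matrix.det_permute]
      apply Ideal.mul_mem_left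
      apply Ideal.mul_mem_left
      apply Ideal.subset_span
      exact ⟨_, _, monoPart_strictMono ρ hρ, monoPart_strictMono σ hσ, rfl⟩
    · rw [Function.not_injective_iff] at hσ
      obtain ⟨a, b, hab, hne⟩ := hσ
      rw [Matrix.det_zero_of_column_eq hne (fun s => by simp [hab])]
      exact Ideal.zero_mem _
  · rw [Function.not_injective_iff] at hρ
    obtain ⟨a, b, hab, hne⟩ := hρ
    rw [Matrix.det_zero_of_row_eq hne (by funext t; simp [hab])]
    exact Ideal.zero_mem _

theorem submatrix_mul_submatrix {a b c : Type*} [Fintype b] {k : ℕ}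
    (X : Matrix a b R) (Y : Matrix b c R) (α : Fin k → a) (β : Fin k → c) :
    (X.submatrix α id) * (Y.submatrix id β) = (X * Y).submatrix α β := by
  ext i j
  simp [Matrix.mul_apply]

/-- (c) → (g) : if `A` is regular then every determinantal ideal is idempotent. -/
theorem detIdeal_idem_of_regular (A : Matrix (Fin m) (Fin n) R)
    (B : Matrix (Fin n) (Fin m) R) (hB : A * B * A = A) (k : ℕ) :
    detIdeal k A * detIdeal k A = detIdeal k A := by
  classical
  refine le_antisymm Ideal.mul_le_left ?_
  conv_lhs => rw [detIdeal]
  rw [Ideal.span_le]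
  rintro x ⟨α, β, hα, hβ, rfl⟩
  have key : A.submatrix α β = ((A * B).submatrix α id) * (A.submatrix id β) := by
    rw [submatrix_mul_submatrix]
    rw [show A * B * A = A from hB]
  rw [key, cauchyBinet]
  apply Ideal.sum_mem
  intro g hg
  simp only [Finset.mem_filter, Finset.mem_univ, true_and] at hg
  refine Ideal.mul_mem_mul ?_ ?_
  · -- det ((A*B).submatrix α g) ∈ detIdeal k A
    have h2 : ((A * B).submatrix α id).submatrix id g = ((A.submatrix α id) * (B.submatrix id g)) := by
      rw [submatrix_mul_submatrix]
      ext i j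
      simp
    rw [h2, cauchyBinet]
    apply Ideal.sum_mem
    intro h hh
    simp only [Finset.mem_filter, Finset.mem_univ, true_and] at hh
    apply Ideal.mul_mem_right
    have : (A.submatrix α id).submatrix id h = A.submatrix α h := by
      ext i j; rfl
    rw [this]
    exact Ideal.subset_span ⟨α, h, hα, hh, rfl⟩
  · have : (A.submatrix id β).submatrix g id = A.submatrix g β := by
      ext i j; rfl
    rw [this]
    exact Ideal.subset_span ⟨g, β, hg, hβ, rfl⟩

/-! ### Bordered determinant identity -/

theorem det_bordered {k : ℕ} (N : Matrix (Fin (k + 1)) (Fin (k + 1)) R)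
    (M : Matrix (Fin k) (Fin k) R) (r c : Fin k → R)
    (hM : ∀ s t, N s.succ t.succ = M s t) (hc : ∀ s, N s.succ 0 = c s)
    (hr : ∀ t, N 0 t.succ = r t) :
    det N = N 0 0 * det M - ∑ t, r t * det (M.updateCol t c) := by
  classical
  rw [Matrix.det_succ_row_zero, Fin.sum_univ_succ]
  have h0 : N.submatrix Fin.succ ((0 : Fin (k + 1)).succAbove) = M := by
    ext s t
    rw [Matrix.submatrix_apply, Fin.zero_succAbove, hM]
  have hterm : ∀ j₀ : Fin k,
      (-1 : R) ^ ((j₀.succ : Fin (k + 1)) : ℕ) * N 0 j₀.succ *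
        det (N.submatrix Fin.succ ((j₀.succ : Fin (k + 1)).succAbove))
      = -(r j₀ * det (M.updateCol j₀ c)) := by
    intro j₀
    have hQ : M.updateCol j₀ c
        = (N.submatrix Fin.succ ((j₀.succ : Fin (k + 1)).succAbove)).submatrix id
            (j₀.cycleRange) := by
      ext s t
      rw [Matrix.submatrix_apply, Matrix.submatrix_apply, id_eq, Fin.succAbove_cycleRange]
      by_cases ht : t = j₀
      · subst ht
        rw [Equiv.swap_apply_right, hc, Matrix.updateCol_self]
      · rw [Equiv.swap_apply_of_ne_of_ne (Fin.succ_ne_zero t) (by simpa using ht), hM,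
          Matrix.updateCol_ne ht]
    have hsign : det (M.updateCol j₀ c)
        = (-1 : R) ^ (j₀ : ℕ) * det (N.submatrix Fin.succ ((j₀.succ : Fin (k+1)).succAbove)) := by
      rw [hQ, Matrix.det_permute', Fin.sign_cycleRange]
      push_cast
      ring
    rw [hsign, hr]
    have : ((j₀.succ : Fin (k + 1)) : ℕ) = (j₀ : ℕ) + 1 := Fin.val_succ j₀
    rw [this, pow_succ]
    ring
  rw [h0]
  simp only [Fin.val_zero, pow_zero, one_mul]
  rw [Finset.sum_congr rfl fun j₀ _ => hterm j₀]
  rw [Finset.sum_neg_distrib]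
  ring

/-! ### The almost-inverse attached to a single minor -/

noncomputable def borderInv {k : ℕ} (A : Matrix (Fin m) (Fin n) R)
    (α : Fin k → Fin m) (β : Fin k → Fin n) : Matrix (Fin n) (Fin m) R :=
  (Matrix.of fun p t => if p = β t then (1 : R) else 0) * (A.submatrix α β).adjugate *
    (Matrix.of fun s q => if q = α s then (1 : R) else 0)

theorem borderInv_identity {k : ℕ} (A : Matrix (Fin m) (Fin n) R)
    (α : Fin k → Fin m) (β : Fin k → Fin n) (i : Fin m) (j : Fin n) :
    (A * borderInv A α β * A) i j
      = (A.submatrix α β).det * A i j - (A.submatrix (Fin.cons i α) (Fin.cons j β)).det := by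
  classical
  have hL : A * (Matrix.of fun p t => if p = β t then (1 : R) else 0) = A.submatrix id β := by
    ext i' t
    simp [Matrix.mul_apply]
  have hR : (Matrix.of fun s q => if q = α s then (1 : R) else 0) * A = A.submatrix α id := by
    ext s j'
    simp [Matrix.mul_apply]
  have hprod : A * borderInv A α β * A
      = A.submatrix id β * ((A.submatrix α β).adjugate * A.submatrix α id) := by
    rw [borderInv, ← Matrix.mul_assoc, ← Matrix.mul_assoc, hL, Matrix.mul_assoc,
      Matrix.mul_assoc, hR, ← Matrix.mul_assoc]
  rw [hprod]
  set M := A.submatrix α β with hMdef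
  set c : Fin k → R := fun s => A (α s) j with hcdef
  have hinner : ∀ t, (M.adjugate * A.submatrix α id) t j = (M.updateCol t c).det := by
    intro t
    have : (M.adjugate * A.submatrix α id) t j = (M.adjugate *ᵥ c) t := by
      simp [Matrix.mul_apply, Matrix.mulVec, dotProduct, hcdef]
    rw [this, ← Matrix.cramer_eq_adjugate_mulVec, Matrix.cramer_apply]
  have hentry : (A.submatrix id β * (M.adjugate * A.submatrix α id)) i j
      = ∑ t, A i (β t) * (M.updateCol t c).det := by
    rw [Matrix.mul_apply]
    exact Finset.sum_congr rfl fun t _ => by rw [hinner t]; rfl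
  rw [hentry]
  have hN := det_bordered (A.submatrix (Fin.cons i α) (Fin.cons j β)) M
    (fun t => A i (β t)) c (fun s t => by simp [hMdef]) (fun s => by simp [hcdef])
    (fun t => by simp)
  have h00 : (A.submatrix (Fin.cons i α) (Fin.cons j β)) 0 0 = A i j := by simp
  rw [h00] at hN
  beta_reduce at hN
  linear_combination hN

/-- Key step: every element of `detIdeal k A` gives an approximate inner inverse modulo
`detIdeal (k+1) A`. -/
theorem exists_borderInv_of_mem {k : ℕ} (A : Matrix (Fin m) (Fin n) R) {f : R}
    (hf : f ∈ detIdeal k A) :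
    ∃ B : Matrix (Fin n) (Fin m) R,
      ∀ i j, (A * B * A) i j - f * A i j ∈ detIdeal (k + 1) A := by
  induction hf using Submodule.span_induction with
  | mem x hx =>
    obtain ⟨α, β, hα, hβ, rfl⟩ := hx
    refine ⟨borderInv A α β, fun i j => ?_⟩
    rw [borderInv_identity]
    have : (A.submatrix α β).det * A i j - (A.submatrix (Fin.cons i α) (Fin.cons j β)).det -
        (A.submatrix α β).det * A i j = -(A.submatrix (Fin.cons i α) (Fin.cons j β)).det := by
      ring
    rw [this]
    exact neg_mem (det_submatrix_mem (k + 1) A _ _)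
  | zero =>
    exact ⟨0, fun i j => by simp⟩
  | add x y hx hy ihx ihy =>
    obtain ⟨Bx, hBx⟩ := ihx
    obtain ⟨By, hBy⟩ := ihy
    refine ⟨Bx + By, fun i j => ?_⟩
    have hexp : (A * (Bx + By) * A) i j = (A * Bx * A) i j + (A * By * A) i j := by
      rw [Matrix.mul_add, Matrix.add_mul]
      rfl
    rw [hexp]
    have : (A * Bx * A) i j + (A * By * A) i j - (x + y) * A i j
        = ((A * Bx * A) i j - x * A i j) + ((A * By * A) i j - y * A i j) := by ring
    rw [this]
    exact add_mem (hBx i j) (hBy i j)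
  | smul r x hx ihx =>
    obtain ⟨B, hB⟩ := ihx
    refine ⟨r • B, fun i j => ?_⟩
    have hexp : (A * (r • B) * A) i j = r * (A * B * A) i j := by
      rw [Matrix.mul_smul, Matrix.smul_mul]
      rfl
    rw [hexp]
    have : r * (A * B * A) i j - r • x * A i j = r * ((A * B * A) i j - x * A i j) := by
      rw [smul_eq_mul]; ring
    rw [this]
    exact Ideal.mul_mem_left _ r (hB i j)

/-- (g) → (c) : if all determinantal ideals are idempotent, `A` is regular. -/
theorem regular_of_detIdeal_idem (A : Matrix (Fin m) (Fin n) R)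
    (h : ∀ k, detIdeal k A * detIdeal k A = detIdeal k A) :
    ∃ B : Matrix (Fin n) (Fin m) R, A * B * A = A := by
  classical
  have he : ∀ k, ∃ e : R, IsIdempotentElem e ∧ detIdeal k A = Ideal.span {e} := fun k =>
    (Ideal.isIdempotentElem_iff_of_fg _ (detIdeal_fg k A)).mp (h k)
  choose e he1 he2 using he
  set P : ℕ → R := fun k => ∏ j ∈ Finset.range k, e (j + 1) with hPdef
  have hPsucc : ∀ k, P (k + 1) = P k * e (k + 1) := fun k => Finset.prod_range_succ _ _
  have hPidem : ∀ k, P k * P k = P k := by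
    intro k
    induction k with
    | zero => simp [hPdef]
    | succ k ih =>
      rw [hPsucc k]
      have h2 : e (k + 1) * e (k + 1) = e (k + 1) := (he1 (k + 1)).eq
      linear_combination e (k + 1) * e (k + 1) * ih + P k * h2
  have hPmem : ∀ k, P k ∈ detIdeal k A := by
    intro k
    cases k with
    | zero => rw [detIdeal_zero]; trivial
    | succ k =>
      rw [hPsucc k, he2 (k + 1)]
      exact Ideal.mul_mem_left _ _ (Ideal.mem_span_singleton_self _)
  set f : ℕ → R := fun k => P k - P (k + 1) with hfdef
  have hfmem : ∀ k, f k ∈ detIdeal k A := fun k =>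
    sub_mem (hPmem k) (by
      rw [hPsucc k]
      exact Ideal.mul_mem_right _ _ (hPmem k))
  have hfidem : ∀ k, f k * f k = f k := by
    intro k
    have h1 := hPidem k
    have h2 : e (k + 1) * e (k + 1) = e (k + 1) := (he1 (k + 1)).eq
    simp only [hfdef, hPsucc k]
    linear_combination (1 - e (k + 1)) * (1 - e (k + 1)) * h1 + P k * h2
  have hfann : ∀ k, ∀ x ∈ detIdeal (k + 1) A, f k * x = 0 := by
    intro k x hx
    rw [he2 (k + 1), Ideal.mem_span_singleton'] at hx
    obtain ⟨r, rfl⟩ := hx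
    have h2 : e (k + 1) * e (k + 1) = e (k + 1) := (he1 (k + 1)).eq
    simp only [hfdef, hPsucc k]
    linear_combination (-(P k * r)) * h2
  -- construct the partial inverses
  have hB : ∀ k, ∃ B : Matrix (Fin n) (Fin m) R, A * B * A = f k • A := by
    intro k
    obtain ⟨B, hB⟩ := exists_borderInv_of_mem A (hfmem k)
    refine ⟨f k • B, ?_⟩
    ext i j
    have hexp : (A * (f k • B) * A) i j = f k * (A * B * A) i j := by
      rw [Matrix.mul_smul, Matrix.smul_mul]
      rfl
    obtain ⟨w, hw, hwv⟩ : ∃ w, w ∈ detIdeal (k + 1) A ∧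
        (A * B * A) i j = f k * A i j + w :=
      ⟨_, hB i j, by ring⟩
    have hann := hfann k w hw
    have hidem := hfidem k
    rw [hexp, hwv]
    have : (f k • A) i j = f k * A i j := rfl
    rw [this]
    linear_combination A i j * hidem + hann
  choose B hBs using hB
  refine ⟨∑ k ∈ Finset.range (m + 1), B k, ?_⟩
  have hsum : A * (∑ k ∈ Finset.range (m + 1), B k) * A
      = ∑ k ∈ Finset.range (m + 1), A * B k * A := by
    rw [Matrix.mul_sum, Matrix.sum_mul]
  rw [hsum]
  have : ∑ k ∈ Finset.range (m + 1), A * B k * A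
      = (∑ k ∈ Finset.range (m + 1), f k) • A := by
    rw [Finset.sum_smul]
    exact Finset.sum_congr rfl fun k _ => hBs k
  rw [this]
  have htel : ∑ k ∈ Finset.range (m + 1), f k = 1 - P (m + 1) := by
    simp only [hfdef]
    rw [Finset.sum_range_sub' P (m + 1)]
    simp [hPdef]
  have hPz : P (m + 1) = 0 := by
    rw [hPsucc m]
    have : e (m + 1) = 0 := by
      have := he2 (m + 1)
      rw [detIdeal_eq_bot (m + 1) (by omega) A] at this
      exact (Ideal.span_singleton_eq_bot.mp this.symm)
    rw [this, mul_zero]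
  rw [htel, hPz, sub_zero, one_smul]

/-! ### Module-theoretic equivalences -/

variable (A : Matrix (Fin m) (Fin n) R)

/-- (c) → (a) -/
theorem isCompl_of_regular (B : Matrix (Fin n) (Fin m) R) (hB : A * B * A = A) :
    ∃ q : Submodule R (Fin m → R), IsCompl (LinearMap.range A.mulVecLin) q := by
  set e := (A * B).mulVecLin with he
  have h1 : e ∘ₗ A.mulVecLin = A.mulVecLin := by
    rw [he, ← Matrix.mulVecLin_mul, hB]
  have hrange : LinearMap.range e = LinearMap.range A.mulVecLin := by
    apply le_antisymm
    · rw [he, Matrix.mulVecLin_mul]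
      exact LinearMap.range_comp_le_range _ _
    · rw [← h1]
      exact LinearMap.range_comp_le_range _ _
  have hproj : LinearMap.IsProj (LinearMap.range A.mulVecLin) e := by
    constructor
    · intro x
      rw [← hrange]
      exact LinearMap.mem_range_self e x
    · rintro x ⟨v, rfl⟩
      exact congrFun (congrArg DFunLike.coe h1) v
  exact ⟨LinearMap.ker e, hproj.isCompl⟩

/-- (a) → (c) -/
theorem regular_of_isCompl (q : Submodule R (Fin m → R))
    (hq : IsCompl (LinearMap.range A.mulVecLin) q) :
    ∃ B : Matrix (Fin n) (Fin m) R, A * B * A = A := by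
  classical
  set p := LinearMap.range A.mulVecLin with hp
  obtain ⟨ψ, hψ⟩ := Module.projective_lifting_property A.mulVecLin.rangeRestrict
    (p.linearProjOfIsCompl q hq) (LinearMap.surjective_rangeRestrict _)
  refine ⟨LinearMap.toMatrix' ψ, ?_⟩
  have key : A.mulVecLin ∘ₗ ψ ∘ₗ A.mulVecLin = A.mulVecLin := by
    refine LinearMap.ext fun v => ?_
    simp only [LinearMap.comp_apply]
    have h1 : (A.mulVecLin.rangeRestrict) (ψ (A.mulVecLin v))
        = p.linearProjOfIsCompl q hq (A.mulVecLin v) :=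
      congrFun (congrArg DFunLike.coe hψ) (A.mulVecLin v)
    have h2 : p.linearProjOfIsCompl q hq (A.mulVecLin v)
        = ⟨A.mulVecLin v, LinearMap.mem_range_self _ v⟩ :=
      Submodule.linearProjOfIsCompl_apply_left hq ⟨A.mulVecLin v, LinearMap.mem_range_self _ v⟩
    have h3 := congrArg (Subtype.val) (h1.trans h2)
    simpa using h3
  have hA : LinearMap.toMatrix' A.mulVecLin = A := LinearMap.toMatrix'_toLin' A
  have hfinal := congrArg LinearMap.toMatrix' key
  rw [LinearMap.toMatrix'_comp, LinearMap.toMatrix'_comp, hA] at hfinal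
  rw [Matrix.mul_assoc]
  exact hfinal

/-- (a) → (b) -/
theorem projective_quotient_of_isCompl (q : Submodule R (Fin m → R))
    (hq : IsCompl (LinearMap.range A.mulVecLin) q) :
    Module.Projective R ((Fin m → R) ⧸ LinearMap.range A.mulVecLin) := by
  set p := LinearMap.range A.mulVecLin
  have hqproj : Module.Projective R q := by
    refine Module.Projective.of_split q.subtype (q.projectionOnto p hq.symm) ?_
    ext x
    simp
  exact Module.Projective.of_equiv (Submodule.quotientEquivOfIsCompl p q hq).symm

/-- (b) → (a) -/
theorem isCompl_of_projective
    (hproj : Module.Projective R ((Fin m → R) ⧸ LinearMap.range A.mulVecLin)) :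
    ∃ q : Submodule R (Fin m → R), IsCompl (LinearMap.range A.mulVecLin) q := by
  set p := LinearMap.range A.mulVecLin with hp
  obtain ⟨s, hs⟩ := Module.projective_lifting_property p.mkQ LinearMap.id
    (Submodule.mkQ_surjective p)
  set e := LinearMap.id - s ∘ₗ p.mkQ with he
  have hproj : LinearMap.IsProj p e := by
    constructor
    · intro x
      have : p.mkQ (e x) = 0 := by
        rw [he]
        simp only [LinearMap.sub_apply, LinearMap.id_apply, LinearMap.comp_apply, map_sub]
        have : p.mkQ (s (p.mkQ x)) = p.mkQ x :=
          congrFun (congrArg DFunLike.coe hs) (p.mkQ x)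
        rw [this, sub_self]
      simpa using (Submodule.Quotient.mk_eq_zero p).mp (by simpa using this)
    · intro x hx
      rw [he]
      simp only [LinearMap.sub_apply, LinearMap.id_apply, LinearMap.comp_apply]
      have : p.mkQ x = 0 := (Submodule.Quotient.mk_eq_zero p).mpr hx
      rw [this, map_zero, sub_zero]
  exact ⟨LinearMap.ker e, hproj.isCompl⟩

/-- (c) → (d) -/
theorem regular_pair (B : Matrix (Fin n) (Fin m) R) (hB : A * B * A = A) :
    ∃ B' : Matrix (Fin n) (Fin m) R, A * B' * A = A ∧ B' * A * B' = B' := by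
  refine ⟨B * A * B, ?_, ?_⟩
  · have h1 : A * (B * A * B) * A = A * B * A * B * A := by
      simp only [Matrix.mul_assoc]
    rw [h1, hB, hB]
  · have h1 : B * A * B * A * (B * A * B) = B * (A * B * A) * B * (A * B) := by
      simp only [Matrix.mul_assoc]
    rw [h1, hB]
    have h2 : B * A * B * (A * B) = B * (A * B * A) * B := by
      simp only [Matrix.mul_assoc]
    rw [h2, hB]

end Stmt18Aux

theorem stmt18 {R : Type*} [CommRing R] {m n : ℕ} (A : Matrix (Fin m) (Fin n) R) :
    List.TFAE
      [ ∃ q : Submodule R (Fin m → R), IsCompl (LinearMap.range A.mulVecLin) q,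
        Module.Projective R ((Fin m → R) ⧸ LinearMap.range A.mulVecLin),
        ∃ B : Matrix (Fin n) (Fin m) R, A * B * A = A,
        ∃ B : Matrix (Fin n) (Fin m) R, A * B * A = A ∧ B * A * B = B,
        ∀ k : ℕ, detIdeal k A * detIdeal k A = detIdeal k A ] := by
  tfae_have 1 → 2 := fun ⟨q, hq⟩ => Stmt18Aux.projective_quotient_of_isCompl A q hq
  tfae_have 2 → 1 := fun h => Stmt18Aux.isCompl_of_projective A h
  tfae_have 1 → 3 := fun ⟨q, hq⟩ => Stmt18Aux.regular_of_isCompl A q hq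
  tfae_have 3 → 1 := fun ⟨B, hB⟩ => Stmt18Aux.isCompl_of_regular A B hB
  tfae_have 3 → 4 := fun ⟨B, hB⟩ => Stmt18Aux.regular_pair A B hB
  tfae_have 4 → 3 := fun ⟨B, hB, _⟩ => ⟨B, hB⟩
  tfae_have 3 → 5 := fun ⟨B, hB⟩ k => Stmt18Aux.detIdeal_idem_of_regular A B hB k
  tfae_have 5 → 3 := fun h => Stmt18Aux.regular_of_detIdeal_idem A h
  tfae_finish
end

section
/- Let R be a commutative ring and P ∈ R^{m×m} an idempotent matrix (P² = P). Define the polynomial R_P(X) := det(I_m + (X − 1)·P) ∈ R[X] and write R_P(X) = Σ_{i=0}^{m} r_i·X^i. Then: (i) R_P(1) = 1; (ii) R_P is multiplicative: det(I_m + (X·Y − 1)·P) = R_P(X)·R_P(Y) in R[X,Y]; consequently the coefficients r_0, …, r_m form a complete system of orthogonal idempotents: r_i·r_j = 0 for i ≠ j, r_i² = r_i, and Σ_i r_i = 1; (iii) r_0 = det(I_m − P); (iv) the annihilator of the R-module Im(P) (the range of the linear map x ↦ P·x on R^m) is the principal ideal generated by r_0. -/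
open Matrix Polynomial

/-- The "multiplicative polynomial" `R_P(X) = det(I_m + (X − 1)·P)` of an
idempotent matrix `P`. -/
noncomputable def multPoly {R : Type*} [CommRing R] {m : ℕ}
    (P : Matrix (Fin m) (Fin m) R) : R[X] :=
  ((1 : Matrix (Fin m) (Fin m) R[X]) + ((X : R[X]) - 1) • P.map C).det

section Aux

variable {R : Type*} [CommRing R] {m : ℕ}

lemma multPoly_eq (P : Matrix (Fin m) (Fin m) R) :
    multPoly P = ((X : R[X]) • P.map C +
      ((1 : Matrix (Fin m) (Fin m) R) - P).map C).det := by
  unfold multPoly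
  congr 1
  refine Matrix.ext fun i j => ?_
  by_cases h : i = j <;>
    simp [Matrix.one_apply, Matrix.map_apply, h] <;> ring

lemma idem_mul {S : Type*} [CommRing S] (Q : Matrix (Fin m) (Fin m) S)
    (hQ : Q * Q = Q) (a b : S) :
    ((1 : Matrix (Fin m) (Fin m) S) + a • Q) * (1 + b • Q)
      = 1 + (a + b + a * b) • Q := by
  simp only [add_mul, mul_add, one_mul, mul_one, Matrix.smul_mul, Matrix.mul_smul,
    smul_smul, hQ, add_smul, mul_comm b a]
  abel

lemma coeff_phi (p : R[X]) (i : ℕ) :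
    (eval₂ ((C : R[X] →+* (R[X])[X]).comp (C : R →+* R[X])) (X * C X) p).coeff i
      = C (p.coeff i) * X ^ i := by
  induction p using Polynomial.induction_on' with
  | add p q hp hq => simp only [eval₂_add, coeff_add, hp, hq, coeff_add, C_add, add_mul]
  | monomial k a =>
    have hh : (C (C a) : (R[X])[X]) * (X * C X) ^ k = C (C a * X ^ k) * X ^ k := by
      rw [mul_pow, ← C_pow, C_mul, mul_comm ((X : (R[X])[X]) ^ k) (C (X ^ k)), ← mul_assoc]
    rw [eval₂_monomial, RingHom.comp_apply, hh, coeff_C_mul, coeff_X_pow, coeff_monomial]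
    by_cases h : i = k <;> simp [h, eq_comm]

lemma det_one_sub_smul (P : Matrix (Fin m) (Fin m) R) (hP : P * P = P) :
    (1 - P).det • P = 0 := by
  have h0 : (1 - P) * P = 0 := by rw [sub_mul, one_mul, hP, sub_self]
  calc (1 - P).det • P = ((1 - P).det • (1 : Matrix (Fin m) (Fin m) R)) * P := by
        rw [Matrix.smul_mul, Matrix.one_mul]
    _ = (adjugate (1 - P) * (1 - P)) * P := by rw [Matrix.adjugate_mul]
    _ = 0 := by rw [Matrix.mul_assoc, h0, Matrix.mul_zero]

lemma det_one_sub_dvd (P : Matrix (Fin m) (Fin m) R) {a : R}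
    (ha : ∀ i j, a * P i j = 0) : a * (1 - P).det = a := by
  set I : Ideal R := Ideal.span {x | ∃ i j, P i j = x} with hI
  have hmem : (1 - P).det - 1 ∈ I := by
    rw [← Ideal.Quotient.eq_zero_iff_mem, map_sub, sub_eq_zero, _root_.map_one,
      RingHom.map_det]
    have hent : ∀ i j, Ideal.Quotient.mk I (P i j) = 0 := fun i j =>
      Ideal.Quotient.eq_zero_iff_mem.mpr (Ideal.subset_span ⟨i, j, rfl⟩)
    have : (1 - P).map (Ideal.Quotient.mk I) = 1 := by
      refine Matrix.ext fun i j => ?_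
      by_cases h : i = j <;>
        simp [Matrix.map_apply, Matrix.one_apply, Matrix.sub_apply, h, hent]
    rw [RingHom.mapMatrix_apply, this, Matrix.det_one]
  have haI : ∀ x ∈ I, a * x = 0 := by
    intro x hx
    induction hx using Submodule.span_induction with
    | mem x hx => obtain ⟨i, j, rfl⟩ := hx; exact ha i j
    | zero => simp
    | add x y _ _ hx hy => rw [mul_add, hx, hy, add_zero]
    | smul r x _ hx => rw [smul_eq_mul, ← mul_assoc, mul_comm a r, mul_assoc, hx, mul_zero]
  have := haI _ hmem
  rw [mul_sub, mul_one, sub_eq_zero] at this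
  exact this

end Aux

theorem stmt19 {R : Type*} [CommRing R] {m : ℕ}
    (P : Matrix (Fin m) (Fin m) R) (hP : P * P = P) :
    -- (i) R_P(1) = 1
    (multPoly P).eval 1 = 1 ∧
    -- (ii) multiplicativity: det(I + (X·Y − 1)·P) = R_P(X)·R_P(Y) in R[Y][X]
    ((1 : Matrix (Fin m) (Fin m) (Polynomial (Polynomial R))) +
        ((X : Polynomial (Polynomial R)) * C (X : Polynomial R) - 1) •
          P.map (fun a => C (C a))).det =
      (multPoly P).map (C : R →+* Polynomial R) * C (multPoly P) ∧
    -- consequently the coefficients form a complete system of orthogonal idempotents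
    (∀ i j : ℕ, i ≠ j → (multPoly P).coeff i * (multPoly P).coeff j = 0) ∧
    (∀ i : ℕ, (multPoly P).coeff i * (multPoly P).coeff i = (multPoly P).coeff i) ∧
    (∑ i ∈ Finset.range (m + 1), (multPoly P).coeff i) = 1 ∧
    -- (iii) r_0 = det(I − P)
    (multPoly P).coeff 0 = (1 - P).det ∧
    -- (iv) the annihilator of Im(P) is generated by r_0
    (LinearMap.range P.mulVecLin).annihilator = Ideal.span {(multPoly P).coeff 0} := by
  set p := multPoly P with hp
  -- (i)
  have h1 : p.eval 1 = 1 := by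
    have := (evalRingHom (1 : R)).map_det
      ((1 : Matrix (Fin m) (Fin m) R[X]) + ((X : R[X]) - 1) • P.map C)
    have hmat : ((1 : Matrix (Fin m) (Fin m) R[X]) + ((X : R[X]) - 1) • P.map C).map
        (evalRingHom (1 : R)) = 1 := by
      refine Matrix.ext fun i j => ?_
      by_cases h : i = j <;> simp [Matrix.one_apply, Matrix.map_apply, h]
    rw [RingHom.mapMatrix_apply, hmat, Matrix.det_one] at this
    simpa [hp, multPoly] using this
  -- the evaluation hom used for (ii) and orthogonality
  set φ : R[X] →+* (R[X])[X] :=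
    eval₂RingHom ((C : R[X] →+* (R[X])[X]).comp (C : R →+* R[X])) (X * C X) with hφ
  have hQ : P.map (fun a => C (C a) : R → (R[X])[X]) * P.map (fun a => C (C a)) =
      P.map (fun a => C (C a)) := by
    have : (P.map (fun a => (C (C a) : (R[X])[X]))) =
        P.map ((C : R[X] →+* (R[X])[X]).comp (C : R →+* R[X])) := rfl
    rw [this, ← Matrix.map_mul, hP]
  -- the LHS matrix of (ii) as the image of the defining matrix under φ
  have hLHS : ((1 : Matrix (Fin m) (Fin m) (Polynomial (Polynomial R))) +
        ((X : Polynomial (Polynomial R)) * C (X : Polynomial R) - 1) •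
          P.map (fun a => C (C a))).det = φ p := by
    rw [hp, multPoly, φ.map_det]
    congr 1
    refine Matrix.ext fun i j => ?_
    by_cases h : i = j <;>
      simp [Matrix.one_apply, Matrix.map_apply, h, hφ, RingHom.mapMatrix_apply, eval₂RingHom] <;> ring
  -- (ii)
  have h2 : ((1 : Matrix (Fin m) (Fin m) (Polynomial (Polynomial R))) +
        ((X : Polynomial (Polynomial R)) * C (X : Polynomial R) - 1) •
          P.map (fun a => C (C a))).det =
      p.map (C : R →+* Polynomial R) * C p := by
    have hB : ((1 : Matrix (Fin m) (Fin m) (Polynomial (Polynomial R))) +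
        ((X : (R[X])[X]) - 1) • P.map (fun a => C (C a))).det
          = p.map (C : R →+* Polynomial R) := by
      rw [show p.map (C : R →+* Polynomial R) = mapRingHom (C : R →+* R[X]) p from rfl,
        hp, multPoly, (mapRingHom (C : R →+* R[X])).map_det]
      congr 1
      refine Matrix.ext fun i j => ?_
      by_cases h : i = j <;>
        simp [Matrix.one_apply, Matrix.map_apply, h, RingHom.mapMatrix_apply]
    have hD : ((1 : Matrix (Fin m) (Fin m) (Polynomial (Polynomial R))) +
        ((C X : (R[X])[X]) - 1) • P.map (fun a => C (C a))).det
          = C p := by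
      rw [hp, multPoly, (C : R[X] →+* (R[X])[X]).map_det]
      congr 1
      refine Matrix.ext fun i j => ?_
      by_cases h : i = j <;>
        simp [Matrix.one_apply, Matrix.map_apply, h, RingHom.mapMatrix_apply]
    have hmul := idem_mul (P.map (fun a => C (C a) : R → (R[X])[X])) hQ
      ((X : (R[X])[X]) - 1) ((C X : (R[X])[X]) - 1)
    have hscal : ((X : (R[X])[X]) - 1) + ((C X : (R[X])[X]) - 1)
        + ((X : (R[X])[X]) - 1) * ((C X : (R[X])[X]) - 1)
        = (X : (R[X])[X]) * C X - 1 := by ring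
    rw [hscal] at hmul
    rw [← hmul, Matrix.det_mul, hB, hD]
  have E : φ p = p.map (C : R →+* Polynomial R) * C p := by rw [← hLHS]; exact h2
  -- key coefficient identity
  have key : ∀ i j : ℕ, p.coeff i * p.coeff j = if j = i then p.coeff i else 0 := by
    intro i j
    have h' := congrArg (fun q : (R[X])[X] => (q.coeff i).coeff j) E
    simp only [hφ, coe_eval₂RingHom] at h'
    rw [coeff_phi, coeff_mul_C, coeff_map] at h'
    rw [coeff_C_mul, coeff_C_mul, coeff_X_pow] at h'
    rw [← h', mul_ite, mul_one, mul_zero]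
  have h3 : ∀ i j : ℕ, i ≠ j → p.coeff i * p.coeff j = 0 := by
    intro i j hij
    rw [key i j, if_neg (fun h => hij h.symm)]
  have h4 : ∀ i : ℕ, p.coeff i * p.coeff i = p.coeff i := by
    intro i; rw [key i i, if_pos rfl]
  have hdeg : p.natDegree ≤ m := by
    rw [hp, multPoly_eq]
    simpa using Polynomial.natDegree_det_X_add_C_le P ((1 : Matrix (Fin m) (Fin m) R) - P)
  have h5 : (∑ i ∈ Finset.range (m + 1), p.coeff i) = 1 := by
    have := Polynomial.eval_eq_sum_range' (lt_of_le_of_lt hdeg (Nat.lt_succ_self m)) (1 : R)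
    rw [h1] at this
    simpa using this.symm
  have h6 : p.coeff 0 = (1 - P).det := by
    rw [hp, multPoly_eq]
    exact Polynomial.coeff_det_X_add_C_zero P _
  have h7 : (LinearMap.range P.mulVecLin).annihilator = Ideal.span {p.coeff 0} := by
    rw [h6]
    apply le_antisymm
    · intro a ha
      rw [Submodule.mem_annihilator] at ha
      have haP : ∀ i j, a * P i j = 0 := by
        intro i j
        have h0 := ha (P.mulVecLin (Pi.single j 1)) (LinearMap.mem_range.mpr ⟨_, rfl⟩)
        have h0' := congrFun h0 i
        simpa [Matrix.mulVecLin_apply, Matrix.mulVec_single] using h0'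
      rw [Ideal.mem_span_singleton]
      exact ⟨a, by rw [mul_comm]; exact (det_one_sub_dvd P haP).symm⟩
    · rw [Ideal.span_le, Set.singleton_subset_iff, SetLike.mem_coe,
        Submodule.mem_annihilator]
      intro x hx
      obtain ⟨v, rfl⟩ := LinearMap.mem_range.mp hx
      calc (1 - P).det • P.mulVecLin v = ((1 - P).det • P).mulVec v := by
            rw [Matrix.smul_mulVec]; rfl
        _ = 0 := by rw [det_one_sub_smul P hP, Matrix.zero_mulVec]
  exact ⟨h1, h2, h3, h4, h5, h6, h7⟩
end
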